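/- arXiv:1008.3091 — 10 statements merged into one kernel-verified Lean document; each statement's English description precedes it below -/
import Mathlib

section
/- Let G=(V,E) be a finite connected simple graph with radius R(G) ≥ 1, let c ∈ C(G), let y ∈ V satisfy d_G(c,y) = R(G), and let γ be a shortest path from c to y. Then there exists a vertex z ≠ y such that every shortest path μ from c to z satisfies γ ∩ μ = {c}, and R(G) − 1 ≤ d_G(c,z) ≤ R(G). -/
open SimpleGraph

noncomputable def eccentr {V : Type} (G : SimpleGraph V) (x : V) : ℕ :=
  sSup (Set.range (G.dist x))

noncomputable def grRadius {V : Type} (G : SimpleGraph V) : ℕ :=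
  sInf (Set.range (eccentr G))

def ncontract {V : Type} (G : SimpleGraph V) (x : V) :
    SimpleGraph {v : V // ¬ G.Adj x v} where
  Adj a b := G.Adj a.1 b.1 ∨
    (a.1 = x ∧ b.1 ≠ x ∧ ∃ y, G.Adj x y ∧ G.Adj y b.1) ∨
    (b.1 = x ∧ a.1 ≠ x ∧ ∃ y, G.Adj x y ∧ G.Adj y a.1)
  symm := ⟨fun a b h => by
    rcases h with h | h | h
    · exact Or.inl h.symm
    · exact Or.inr (Or.inr h)
    · exact Or.inr (Or.inl h)⟩
  loopless := ⟨fun a h => by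
    rcases h with h | ⟨h1, h2, -⟩ | ⟨h1, h2, -⟩
    · exact G.loopless.irrefl _ h
    · exact h2 h1
    · exact h2 h1⟩

lemma dist_add_dist_le_length {V : Type} [DecidableEq V] {G : SimpleGraph V} {a b v : V}
    (p : G.Walk a b) (h : v ∈ p.support) :
    G.dist a v + G.dist v b ≤ p.length := by
  have hsp := congrArg Walk.length (p.take_spec h)
  rw [Walk.length_append] at hsp
  calc G.dist a v + G.dist v b
      ≤ (p.takeUntil v h).length + (p.dropUntil v h).length :=
        Nat.add_le_add (dist_le _) (dist_le _)
    _ = p.length := hsp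

theorem stmt_1 {V : Type} [Fintype V] (G : SimpleGraph V) (hconn : G.Connected)
    (hR : 1 ≤ grRadius G) (c y : V) (hc : eccentr G c = grRadius G)
    (hy : G.dist c y = grRadius G) (γ : G.Walk c y) (hγp : γ.IsPath)
    (hγl : γ.length = grRadius G) :
    ∃ z : V, z ≠ y ∧
      (∀ μ : G.Walk c z, μ.IsPath → μ.length = G.dist c z →
        ∀ v ∈ γ.support, v ∈ μ.support → v = c) ∧
      grRadius G - 1 ≤ G.dist c z ∧ G.dist c z ≤ grRadius G := by
  classical
  have hcy : c ≠ y := by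
    rintro rfl
    rw [SimpleGraph.dist_self] at hy
    omega
  obtain ⟨c₁, hadj, p', hγeq⟩ := Walk.exists_eq_cons_of_ne hcy γ
  -- eccentricity of c₁ is at least the radius, and is attained at some w
  have hRle : grRadius G ≤ eccentr G c₁ := Nat.sInf_le ⟨c₁, rfl⟩
  have hne : (Set.range (G.dist c₁)).Nonempty := ⟨_, ⟨c, rfl⟩⟩
  have hbdd : BddAbove (Set.range (G.dist c₁)) := (Set.finite_range _).bddAbove
  have hmem : eccentr G c₁ ∈ Set.range (G.dist c₁) := Nat.sSup_mem hne hbdd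
  obtain ⟨w, hw⟩ := hmem
  have hw1 : grRadius G ≤ G.dist c₁ w := by rw [hw]; exact hRle
  -- d(c₁, y) ≤ R - 1, via p'
  have hp'len : p'.length + 1 = grRadius G := by
    have := congrArg Walk.length hγeq
    rw [Walk.length_cons] at this
    omega
  have hc1y : G.dist c₁ y + 1 ≤ grRadius G := by
    have := dist_le p'
    omega
  -- w ≠ y
  have hwy : w ≠ y := by
    rintro rfl
    omega
  -- d(c, w) ≤ R
  have hcwle : G.dist c w ≤ grRadius G := by
    rw [← hc]
    exact le_csSup ((Set.finite_range _).bddAbove) ⟨w, rfl⟩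
  -- d(c₁, c) ≤ 1
  have hdc1c : G.dist c₁ c ≤ 1 := dist_le (Walk.cons hadj.symm Walk.nil)
  have hcwge : grRadius G - 1 ≤ G.dist c w := by
    have := hconn.dist_triangle (u := c₁) (v := c) (w := w)
    omega
  refine ⟨w, hwy, ?_, hcwge, hcwle⟩
  intro μ hμp hμl v hvγ hvμ
  by_contra hvc
  -- v ∈ p'.support
  have hvp' : v ∈ p'.support := by
    rw [hγeq, Walk.support_cons, List.mem_cons] at hvγ
    exact hvγ.resolve_left hvc
  -- d(c₁,v) + d(v,y) ≤ p'.length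
  have h1 : G.dist c₁ v + G.dist v y ≤ p'.length := dist_add_dist_le_length p' hvp'
  -- d(c,y) ≤ d(c,v) + d(v,y)
  have h2 : G.dist c y ≤ G.dist c v + G.dist v y := hconn.dist_triangle
  -- d(c,v) + d(v,w) ≤ μ.length = d(c,w)
  have h3 : G.dist c v + G.dist v w ≤ G.dist c w := by
    rw [← hμl]
    exact dist_add_dist_le_length μ hvμ
  -- d(c₁,w) ≤ d(c₁,v) + d(v,w)
  have h4 : G.dist c₁ w ≤ G.dist c₁ v + G.dist v w := hconn.dist_triangle
  omega
end

section
/- Let G=(V,E) be a finite connected simple graph, let x ∈ V, and let a, b be vertices of G/x (i.e., a, b ∈ V \ N(x)). If no shortest path from a to b in G passes through x, then d_{G/x}(a,b) ≥ d_G(a,b) − 1. -/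
open SimpleGraph

private lemma lift_no_x {V : Type} {G : SimpleGraph V} {x : V}
    {c d : {v : V // ¬ G.Adj x v}} (q : (ncontract G x).Walk c d)
    (hx : (⟨x, G.loopless.irrefl x⟩ : {v : V // ¬ G.Adj x v}) ∉ q.support) :
    ∃ p : G.Walk c.1 d.1, p.length = q.length := by
  induction q with
  | nil => exact ⟨SimpleGraph.Walk.nil, rfl⟩
  | @cons u w d h q ih =>
    rw [SimpleGraph.Walk.support_cons, List.mem_cons] at hx
    push_neg at hx
    obtain ⟨hu, hx'⟩ := hx
    have hw : (⟨x, G.loopless.irrefl x⟩ : {v : V // ¬ G.Adj x v}) ≠ w := by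
      intro hh
      subst hh
      exact hx' q.start_mem_support
    have hadj : G.Adj u.1 w.1 := by
      rcases h with h | ⟨h1, -⟩ | ⟨h1, -⟩
      · exact h
      · exact absurd (Subtype.ext h1.symm) hu
      · exact absurd (Subtype.ext h1.symm) hw
    obtain ⟨p, hp⟩ := ih hx'
    exact ⟨SimpleGraph.Walk.cons hadj p, by simp [hp]⟩

private lemma lift_from_x {V : Type} {G : SimpleGraph V} {x : V}
    {d : {v : V // ¬ G.Adj x v}}
    (q : (ncontract G x).Walk ⟨x, G.loopless.irrefl x⟩ d) (hq : q.IsPath) :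
    ∃ p : G.Walk x d.1, x ∈ p.support ∧ p.length ≤ q.length + 1 := by
  cases q with
  | nil => exact ⟨SimpleGraph.Walk.nil, by simp, by simp⟩
  | @cons _ w _ h q =>
    rw [SimpleGraph.Walk.cons_isPath_iff] at hq
    obtain ⟨hq', hxs⟩ := hq
    obtain ⟨p, hp⟩ := lift_no_x q hxs
    rcases h with h | ⟨-, -, y, hxy, hyw⟩ | ⟨-, h2, -⟩
    · exact absurd h w.2
    · refine ⟨SimpleGraph.Walk.cons hxy (SimpleGraph.Walk.cons hyw p), by simp, ?_⟩
      show p.length + 1 + 1 ≤ q.length + 1 + 1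
      omega
    · exact absurd rfl h2

private lemma ncontract_reach {V : Type} {G : SimpleGraph V} {x : V}
    {u v : V} (w : G.Walk u v) (hv : ¬ G.Adj x v) :
    (∀ hu : ¬ G.Adj x u, (ncontract G x).Reachable ⟨u, hu⟩ ⟨v, hv⟩) ∧
    (G.Adj x u → (ncontract G x).Reachable ⟨x, G.loopless.irrefl x⟩ ⟨v, hv⟩) := by
  classical
  induction w with
  | nil =>
    refine ⟨fun hu => by rfl, fun h => absurd h hv⟩
  | @cons u u' v h w ih =>
    constructor
    · intro hu
      by_cases hxu' : G.Adj x u'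
      · rcases eq_or_ne u x with heq | hne
        · have he : (⟨u, hu⟩ : {v : V // ¬ G.Adj x v}) = ⟨x, G.loopless.irrefl x⟩ := Subtype.ext heq
          rw [he]
          exact (ih hv).2 hxu'
        · have hadj : (ncontract G x).Adj ⟨u, hu⟩ ⟨x, G.loopless.irrefl x⟩ :=
            Or.inr (Or.inr ⟨rfl, hne, u', hxu', h.symm⟩)
          exact (SimpleGraph.Adj.reachable hadj).trans ((ih hv).2 hxu')
      · have hadj : (ncontract G x).Adj ⟨u, hu⟩ ⟨u', hxu'⟩ := Or.inl h
        exact (SimpleGraph.Adj.reachable hadj).trans ((ih hv).1 hxu')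
    · intro hxu
      by_cases hxu' : G.Adj x u'
      · exact (ih hv).2 hxu'
      · rcases eq_or_ne u' x with rfl | hne
        · exact (ih hv).1 hxu'
        · have hadj : (ncontract G x).Adj ⟨x, G.loopless.irrefl x⟩ ⟨u', hxu'⟩ :=
            Or.inr (Or.inl ⟨rfl, hne, u, hxu, h⟩)
          exact (SimpleGraph.Adj.reachable hadj).trans ((ih hv).1 hxu')

theorem stmt_3 {V : Type} [Fintype V] (G : SimpleGraph V) (hconn : G.Connected)
    (x a b : V) (ha : ¬ G.Adj x a) (hb : ¬ G.Adj x b)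
    (hno : ∀ p : G.Walk a b, p.IsPath → p.length = G.dist a b → x ∉ p.support) :
    G.dist a b ≤ (ncontract G x).dist ⟨a, ha⟩ ⟨b, hb⟩ + 1 := by
  classical
  obtain ⟨w⟩ := hconn.preconnected a b
  have hreach : (ncontract G x).Reachable ⟨a, ha⟩ ⟨b, hb⟩ := (ncontract_reach w hb).1 ha
  obtain ⟨q, hq, hlen⟩ := hreach.exists_path_of_dist
  set n := (ncontract G x).dist ⟨a, ha⟩ ⟨b, hb⟩
  by_cases hxs : (⟨x, G.loopless.irrefl x⟩ : {v : V // ¬ G.Adj x v}) ∈ q.support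
  · -- x on the contracted shortest path
    set q1 := q.takeUntil _ hxs with hq1def
    set q2 := q.dropUntil _ hxs with hq2def
    have hsum : q1.length + q2.length = n := by
      have := congrArg SimpleGraph.Walk.length (q.take_spec hxs)
      rwa [SimpleGraph.Walk.length_append, hlen] at this
    obtain ⟨p1, hxp1, hl1⟩ := lift_from_x q1.reverse (hq.takeUntil hxs).reverse
    obtain ⟨p2, hxp2, hl2⟩ := lift_from_x q2 (hq.dropUntil hxs)
    rw [SimpleGraph.Walk.length_reverse] at hl1
    set p : G.Walk a b := p1.reverse.append p2 with hpdef
    have hplen : p.length ≤ n + 2 := by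
      rw [hpdef, SimpleGraph.Walk.length_append, SimpleGraph.Walk.length_reverse]
      omega
    have hxp : x ∈ p.support := by
      rw [hpdef, SimpleGraph.Walk.mem_support_append_iff]
      left
      rw [SimpleGraph.Walk.support_reverse, List.mem_reverse]
      exact hxp1
    by_contra hcon
    push_neg at hcon
    have hd1 : n + 2 ≤ G.dist a b := hcon
    have hd2 : G.dist a b ≤ p.length := SimpleGraph.dist_le p
    have heq : p.length = G.dist a b := by omega
    exact hno p (p.isPath_of_length_eq_dist heq) heq hxp
  · obtain ⟨p, hp⟩ := lift_no_x q hxs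
    have hd : G.dist a b ≤ p.length := SimpleGraph.dist_le p
    omega
end

section
/- Let G=(V,E) be a finite connected simple graph, let x ∈ V, and let a, b be vertices of G/x (i.e., a, b ∈ V \ N(x)) such that no shortest path from a to b in G passes through x. Then d_{G/x}(a,b) = d_G(a,b) − 1 if and only if there exists a path in G from a to b of length d_G(a,b) + 1 that passes through x. -/
open SimpleGraph

namespace NCHelper

variable {V : Type} {G : SimpleGraph V} {x : V}

/-- Projection map from `V` to the vertex set of `ncontract G x`. -/
noncomputable def piv (G : SimpleGraph V) (x : V) (v : V) : {v : V // ¬ G.Adj x v} :=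
  letI := Classical.dec (G.Adj x v)
  if h : G.Adj x v then ⟨x, G.loopless.irrefl x⟩ else ⟨v, h⟩

lemma piv_of_not {v : V} (h : ¬ G.Adj x v) : piv G x v = ⟨v, h⟩ := by
  unfold piv; exact dif_neg h

lemma piv_of_adj {v : V} (h : G.Adj x v) : piv G x v = ⟨x, G.loopless.irrefl x⟩ := by
  unfold piv; exact dif_pos h

lemma adj_piv {u w : V} (h : G.Adj u w) (hne : piv G x u ≠ piv G x w) :
    (ncontract G x).Adj (piv G x u) (piv G x w) := by
  classical
  by_cases hu : G.Adj x u <;> by_cases hw : G.Adj x w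
  · exact absurd (by rw [piv_of_adj hu, piv_of_adj hw]) hne
  · by_cases hwx : w = x
    · subst hwx
      exact absurd (by rw [piv_of_adj hu, piv_of_not hw]) hne
    · rw [piv_of_adj hu, piv_of_not hw]
      exact Or.inr (Or.inl ⟨rfl, hwx, u, hu, h⟩)
  · by_cases hux : u = x
    · subst hux
      exact absurd (by rw [piv_of_not hu, piv_of_adj hw]) hne
    · rw [piv_of_not hu, piv_of_adj hw]
      exact Or.inr (Or.inr ⟨rfl, hux, w, hw, h.symm⟩)
  · rw [piv_of_not hu, piv_of_not hw]
    exact Or.inl h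

lemma proj_walk {u v : V} (p : G.Walk u v) :
    ∃ q : (ncontract G x).Walk (piv G x u) (piv G x v), q.length ≤ p.length := by
  classical
  induction p with
  | nil => exact ⟨Walk.nil, le_rfl⟩
  | @cons u w v h p ih =>
    obtain ⟨q, hq⟩ := ih
    by_cases he : piv G x u = piv G x w
    · exact ⟨q.copy he.symm rfl, by simpa using Nat.le_succ_of_le hq⟩
    · exact ⟨Walk.cons (adj_piv h he) q, by simpa using hq⟩

lemma proj_from_x {v : V} (p : G.Walk x v) (hv : v ≠ x) :
    ∃ q : (ncontract G x).Walk ⟨x, G.loopless.irrefl x⟩ (piv G x v), q.length + 1 ≤ p.length := by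
  cases p with
  | nil => exact absurd rfl hv
  | @cons _ w _ h p =>
    obtain ⟨q, hq⟩ := proj_walk (x := x) p
    exact ⟨q.copy (piv_of_adj h) rfl, by simpa using Nat.succ_le_succ hq⟩

lemma x_not_mem_map {l : List {v : V // ¬ G.Adj x v}}
    (h : (⟨x, G.loopless.irrefl x⟩ : {v : V // ¬ G.Adj x v}) ∉ l) : x ∉ l.map Subtype.val := by
  intro hx
  obtain ⟨s, hs, hsx⟩ := List.mem_map.mp hx
  have hsX : s = ⟨x, G.loopless.irrefl x⟩ := Subtype.ext hsx
  exact h (hsX ▸ hs)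

lemma adjx_not_mem_map {y : V} (hy : G.Adj x y) (l : List {v : V // ¬ G.Adj x v}) :
    y ∉ l.map Subtype.val := by
  intro h
  obtain ⟨s, -, rfl⟩ := List.mem_map.mp h
  exact s.2 hy

lemma lift_walk {A B : {v : V // ¬ G.Adj x v}} (q : (ncontract G x).Walk A B)
    (hq : (⟨x, G.loopless.irrefl x⟩ : {v : V // ¬ G.Adj x v}) ∉ q.support) :
    ∃ p : G.Walk A.1 B.1, p.length = q.length ∧ p.support = q.support.map Subtype.val := by
  induction q with
  | nil => exact ⟨Walk.nil, rfl, by simp⟩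
  | @cons A w B e q ih =>
    rw [Walk.support_cons, List.mem_cons] at hq
    push_neg at hq
    obtain ⟨hA, hq'⟩ := hq
    have hadj : G.Adj A.1 w.1 := by
      rcases e with h | ⟨h1, -, -⟩ | ⟨h1, -, -⟩
      · exact h
      · exact absurd (Subtype.ext h1).symm hA
      · have hwX : w = ⟨x, G.loopless.irrefl x⟩ := Subtype.ext h1
        exact absurd (hwX ▸ q.start_mem_support) hq'
    obtain ⟨p, hl, hs⟩ := ih hq'
    exact ⟨Walk.cons hadj p, by simp [hl], by simp [hs]⟩

lemma lift_from_x {A : {v : V // ¬ G.Adj x v}}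
    (r : (ncontract G x).Walk ⟨x, G.loopless.irrefl x⟩ A) (hr : r.IsPath)
    (hA : A ≠ ⟨x, G.loopless.irrefl x⟩) :
    ∃ (y : V) (w : {v : V // ¬ G.Adj x v}) (p : G.Walk w.1 A.1),
      G.Adj x y ∧ G.Adj y w.1 ∧ p.length + 1 = r.length ∧
      p.support = r.support.tail.map Subtype.val := by
  cases r with
  | nil => exact absurd rfl hA
  | @cons _ w _ e r =>
    have hnd := (Walk.isPath_def _).mp hr
    rw [Walk.support_cons, List.nodup_cons] at hnd
    obtain ⟨hxr, -⟩ := hnd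
    obtain ⟨y, hxy, hyw⟩ : ∃ y, G.Adj x y ∧ G.Adj y w.1 := by
      rcases e with h | ⟨-, -, hy⟩ | ⟨-, h2, -⟩
      · exact absurd h w.2
      · exact hy
      · exact absurd rfl h2
    obtain ⟨p, hl, hs⟩ := lift_walk r hxr
    exact ⟨y, w, p, hxy, hyw, by simp [hl], by simp [hs]⟩

lemma lift_through_x {A B : {v : V // ¬ G.Adj x v}}
    (q : (ncontract G x).Walk A B) (hq : q.IsPath)
    (hmem : (⟨x, G.loopless.irrefl x⟩ : {v : V // ¬ G.Adj x v}) ∈ q.support)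
    (hA : A ≠ ⟨x, G.loopless.irrefl x⟩) (hB : B ≠ ⟨x, G.loopless.irrefl x⟩) :
    (∃ p : G.Walk A.1 B.1, p.length = q.length) ∨
    (∃ p : G.Walk A.1 B.1, p.IsPath ∧ p.length = q.length + 2 ∧ x ∈ p.support) := by
  classical
  have hspec := q.take_spec hmem
  set t := q.takeUntil _ hmem with htdef
  set d := q.dropUntil _ hmem with hddef
  have ht : t.IsPath := hq.takeUntil hmem
  have hd : d.IsPath := hq.dropUntil hmem
  obtain ⟨y₁, w₁, p₁, hxy₁, hyw₁, hl₁, hs₁⟩ := lift_from_x t.reverse ht.reverse hA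
  obtain ⟨y₂, w₂, p₂, hxy₂, hyw₂, hl₂, hs₂⟩ := lift_from_x d hd hB
  rw [Walk.length_reverse] at hl₁
  have hlen : t.length + d.length = q.length := by
    rw [← Walk.length_append, hspec]
  by_cases hyy : y₁ = y₂
  · left
    subst hyy
    refine ⟨p₁.reverse.append (Walk.cons hyw₁.symm (Walk.cons hyw₂ p₂)), ?_⟩
    simp only [Walk.length_append, Walk.length_reverse, Walk.length_cons]
    omega
  · right
    set S₁ := t.reverse.support.tail with hS₁def
    set S₂ := d.support.tail with hS₂def
    -- structure of q.support
    have hts : t.support = S₁.reverse ++ [(⟨x, G.loopless.irrefl x⟩ : {v : V // ¬ G.Adj x v})] := by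
      have h1 : t.reverse.support = ⟨x, G.loopless.irrefl x⟩ :: S₁ := t.reverse.support_eq_cons
      have h2 := congrArg List.reverse h1
      rw [Walk.support_reverse, List.reverse_reverse] at h2
      rw [h2]; simp
    have hqsup : q.support = S₁.reverse ++ ⟨x, G.loopless.irrefl x⟩ :: S₂ := by
      conv_lhs => rw [← hspec]
      rw [Walk.support_append, hts]
      simp
      exact d.support_eq_cons
    have hnd : (S₁.reverse ++ ⟨x, G.loopless.irrefl x⟩ :: S₂).Nodup := hqsup ▸ (Walk.isPath_def _).mp hq
    rw [List.nodup_append] at hnd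
    obtain ⟨h1, h2, hdisj⟩ := hnd
    rw [List.nodup_reverse] at h1
    rw [List.nodup_cons] at h2
    obtain ⟨hXS₂, hS₂nd⟩ := h2
    have hXS₁ : (⟨x, G.loopless.irrefl x⟩ : {v : V // ¬ G.Adj x v}) ∉ S₁ := fun h =>
      hdisj _ (List.mem_reverse.mpr h) _ List.mem_cons_self rfl
    have hdisj' : ∀ s ∈ S₁, s ∉ S₂ := fun s hs hs2 =>
      hdisj _ (List.mem_reverse.mpr hs) _ (List.mem_cons_of_mem _ hs2) rfl
    refine ⟨p₁.reverse.append (Walk.cons hyw₁.symm (Walk.cons hxy₁.symm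
      (Walk.cons hxy₂ (Walk.cons hyw₂ p₂)))), ?_, ?_, ?_⟩
    · rw [Walk.isPath_def]
      have hpsup : (p₁.reverse.append (Walk.cons hyw₁.symm (Walk.cons hxy₁.symm
          (Walk.cons hxy₂ (Walk.cons hyw₂ p₂))))).support
          = (S₁.map Subtype.val).reverse ++ y₁ :: x :: y₂ :: S₂.map Subtype.val := by
        simp [Walk.support_append, Walk.support_reverse, Walk.support_cons, hs₁, hs₂]
      rw [hpsup, List.nodup_append, List.nodup_reverse]
      refine ⟨h1.map Subtype.val_injective, ?_, ?_⟩
      · rw [List.nodup_cons, List.nodup_cons, List.nodup_cons]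
        refine ⟨?_, ?_, ?_, hS₂nd.map Subtype.val_injective⟩
        · simp only [List.mem_cons]
          push_neg
          exact ⟨hxy₁.ne', hyy, adjx_not_mem_map hxy₁ _⟩
        · simp only [List.mem_cons]
          push_neg
          exact ⟨hxy₂.ne, x_not_mem_map hXS₂⟩
        · exact adjx_not_mem_map hxy₂ _
      · intro z hz z' hz2 hzz
        subst hzz
        rw [List.mem_reverse] at hz
        obtain ⟨s, hs, rfl⟩ := List.mem_map.mp hz
        rcases List.mem_cons.mp hz2 with h | h
        · exact s.2 (by rw [h]; exact hxy₁)
        rcases List.mem_cons.mp h with h | h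
        · have hsX : s = ⟨x, G.loopless.irrefl x⟩ := Subtype.ext h
          exact hXS₁ (hsX ▸ hs)
        rcases List.mem_cons.mp h with h | h
        · exact s.2 (by rw [h]; exact hxy₂)
        · obtain ⟨s', hs', hval⟩ := List.mem_map.mp h
          have hss : s' = s := Subtype.ext hval
          exact hdisj' s hs (hss ▸ hs')
    · simp only [Walk.length_append, Walk.length_reverse, Walk.length_cons]
      omega
    · simp [Walk.support_append, Walk.support_cons]

lemma nc_reachable {a b : V} (ha : ¬ G.Adj x a) (hb : ¬ G.Adj x b) (hr : G.Reachable a b) :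
    (ncontract G x).Reachable ⟨a, ha⟩ ⟨b, hb⟩ := by
  obtain ⟨p⟩ := hr
  obtain ⟨q, -⟩ := proj_walk (x := x) p
  exact ⟨q.copy (piv_of_not ha) (piv_of_not hb)⟩

lemma claimA {a b : V} (ha : ¬ G.Adj x a) (hb : ¬ G.Adj x b) (hax : a ≠ x) (hbx : b ≠ x)
    (hr : G.Reachable a b)
    (hno : ∀ p : G.Walk a b, p.IsPath → p.length = G.dist a b → x ∉ p.support) :
    G.dist a b ≤ (ncontract G x).dist ⟨a, ha⟩ ⟨b, hb⟩ + 1 := by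
  classical
  obtain ⟨q, hqp, hql⟩ := (nc_reachable ha hb hr).exists_path_of_dist
  by_cases hmem : (⟨x, G.loopless.irrefl x⟩ : {v : V // ¬ G.Adj x v}) ∈ q.support
  · rcases lift_through_x q hqp hmem (fun h => hax (congrArg Subtype.val h))
        (fun h => hbx (congrArg Subtype.val h)) with ⟨p, hp⟩ | ⟨p, hpp, hpl, hpx⟩
    · have h0 : G.dist a b ≤ p.length := G.dist_le p
      omega
    · by_contra hcon
      push_neg at hcon
      have h1 : G.dist a b ≤ p.length := G.dist_le p
      have h2 : p.length = G.dist a b := by omega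
      exact hno p hpp h2 hpx
  · obtain ⟨p, hpl, -⟩ := lift_walk q hmem
    have h0 : G.dist a b ≤ p.length := G.dist_le p
    omega

end NCHelper

theorem stmt_4 {V : Type} [Fintype V] (G : SimpleGraph V) (hconn : G.Connected)
    (x a b : V) (ha : ¬ G.Adj x a) (hb : ¬ G.Adj x b)
    (hno : ∀ p : G.Walk a b, p.IsPath → p.length = G.dist a b → x ∉ p.support) :
    (ncontract G x).dist ⟨a, ha⟩ ⟨b, hb⟩ + 1 = G.dist a b ↔
      ∃ p : G.Walk a b, p.IsPath ∧ p.length = G.dist a b + 1 ∧ x ∈ p.support := by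
  classical
  obtain ⟨p₀, hp₀, hl₀⟩ := hconn.exists_path_of_dist a b
  have hx₀ := hno p₀ hp₀ hl₀
  have hax : a ≠ x := fun h => hx₀ (h ▸ p₀.start_mem_support)
  have hbx : b ≠ x := fun h => hx₀ (h ▸ p₀.end_mem_support)
  have hA : (⟨a, ha⟩ : {v : V // ¬ G.Adj x v}) ≠ ⟨x, G.loopless.irrefl x⟩ :=
    fun h => hax (congrArg Subtype.val h)
  have hB : (⟨b, hb⟩ : {v : V // ¬ G.Adj x v}) ≠ ⟨x, G.loopless.irrefl x⟩ :=
    fun h => hbx (congrArg Subtype.val h)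
  have hclaim := NCHelper.claimA ha hb hax hbx (hconn a b) hno
  constructor
  · intro hdist
    obtain ⟨q, hqp, hql⟩ := (NCHelper.nc_reachable ha hb (hconn a b)).exists_path_of_dist
    by_cases hmem : (⟨x, G.loopless.irrefl x⟩ : {v : V // ¬ G.Adj x v}) ∈ q.support
    · rcases NCHelper.lift_through_x q hqp hmem hA hB with ⟨p, hp⟩ | ⟨p, hpp, hpl, hpx⟩
      · exfalso
        have h0 : G.dist a b ≤ p.length := G.dist_le p
        omega
      · exact ⟨p, hpp, by omega, hpx⟩
    · exfalso
      obtain ⟨p, hpl, -⟩ := NCHelper.lift_walk q hmem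
      have h0 : G.dist a b ≤ p.length := G.dist_le p
      omega
  · rintro ⟨p, hpp, hpl, hpx⟩
    have hsp := p.take_spec hpx
    obtain ⟨q₁, hq₁⟩ := NCHelper.proj_from_x (p.takeUntil x hpx).reverse hax
    obtain ⟨q₂, hq₂⟩ := NCHelper.proj_from_x (p.dropUntil x hpx) hbx
    rw [Walk.length_reverse] at hq₁
    have hcomb : (ncontract G x).dist ⟨a, ha⟩ ⟨b, hb⟩ ≤ q₁.length + q₂.length := by
      have := (ncontract G x).dist_le
        ((q₁.reverse.append q₂).copy (NCHelper.piv_of_not ha) (NCHelper.piv_of_not hb))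
      simpa using this
    have hlen : (p.takeUntil x hpx).length + (p.dropUntil x hpx).length = G.dist a b + 1 := by
      rw [← hpl, ← Walk.length_append, hsp]
    omega
end

section
/- Let G=(V,E) be a finite connected simple graph, let x ∈ V, and let a, b be vertices of G/x (i.e., a, b ∈ V \ N(x)). Then d_{G/x}(a,b) ≥ d_G(a,b) − 2. -/
open SimpleGraph

-- the vertex x inside the contracted graph
private def xvert {V : Type} (G : SimpleGraph V) (x : V) : {v : V // ¬ G.Adj x v} :=
  ⟨x, G.irrefl⟩

/-- If a walk in `ncontract G x` avoids `x`, all its edges are `G`-edges. -/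
private lemma distC {V : Type} (G : SimpleGraph V) (hconn : G.Connected) (x : V) :
    ∀ {a b : {v : V // ¬ G.Adj x v}} (W : (ncontract G x).Walk a b),
      xvert G x ∉ W.support → G.dist a.1 b.1 ≤ W.length := by
  intro a b W
  induction W with
  | nil => simp
  | @cons u c w h W ih =>
    intro hx
    simp only [SimpleGraph.Walk.support_cons, List.mem_cons, not_or] at hx
    have hu : u ≠ xvert G x := fun he => hx.1 he.symm
    have hc : c ≠ xvert G x := by
      intro he
      exact hx.2 (he ▸ W.start_mem_support)
    have hadj : G.Adj u.1 c.1 := by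
      rcases h with h | ⟨h1, -, -⟩ | ⟨h1, -, -⟩
      · exact h
      · exact absurd (Subtype.ext h1) hu
      · exact absurd (Subtype.ext h1) hc
    have := ih hx.2
    calc G.dist u.1 w.1 ≤ G.dist u.1 c.1 + G.dist c.1 w.1 := hconn.dist_triangle
      _ ≤ 1 + W.length := by
          have h1 : G.dist u.1 c.1 ≤ 1 := by
            have := SimpleGraph.dist_le (SimpleGraph.Walk.cons hadj SimpleGraph.Walk.nil)
            simpa using this
          omega
      _ = W.length + 1 := by omega
      _ = (SimpleGraph.Walk.cons h W).length := by simp [SimpleGraph.Walk.length_cons]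

/-- If a walk in `ncontract G x` starts at `x` and never revisits it. -/
private lemma distD {V : Type} (G : SimpleGraph V) (hconn : G.Connected) (x : V) :
    ∀ {b : {v : V // ¬ G.Adj x v}} (W : (ncontract G x).Walk (xvert G x) b),
      xvert G x ∉ W.support.tail → G.dist x b.1 ≤ W.length + 1 := by
  intro b W
  cases W with
  | nil => simp [xvert, SimpleGraph.dist_self]
  | @cons _ c _ h W =>
    intro hx
    simp only [SimpleGraph.Walk.support_cons, List.tail_cons] at hx
    have hc : c ≠ xvert G x := by
      intro he
      exact hx (he ▸ W.start_mem_support)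
    have hcx : c.1 ≠ x := fun he => hc (Subtype.ext he)
    obtain ⟨y, hxy, hyc⟩ : ∃ y, G.Adj x y ∧ G.Adj y c.1 := by
      rcases h with h | ⟨-, -, h3⟩ | ⟨h1, -⟩
      · exact absurd h c.2
      · exact h3
      · exact absurd h1 hcx
    have h2 : G.dist x c.1 ≤ 2 := by
      have := SimpleGraph.dist_le (SimpleGraph.Walk.cons hxy
        (SimpleGraph.Walk.cons hyc SimpleGraph.Walk.nil))
      simpa using this
    have h3 := distC G hconn x W hx
    calc G.dist x b.1 ≤ G.dist x c.1 + G.dist c.1 b.1 := hconn.dist_triangle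
      _ ≤ 2 + W.length := by omega
      _ = (SimpleGraph.Walk.cons h W).length + 1 := by
          simp [SimpleGraph.Walk.length_cons]; omega

/-- Reachability in the contraction. -/
private lemma reachE {V : Type} (G : SimpleGraph V) (x : V) :
    ∀ {u b : V} (_ : G.Walk u b) (hb : ¬ G.Adj x b),
      (∀ hu : ¬ G.Adj x u, (ncontract G x).Reachable ⟨u, hu⟩ ⟨b, hb⟩) ∧
      (G.Adj x u → (ncontract G x).Reachable (xvert G x) ⟨b, hb⟩) := by
  intro u b W
  induction W with
  | nil =>
    intro hb
    refine ⟨fun hu => by rfl, fun h => absurd h hb⟩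
  | @cons u c w h W ih =>
    intro hb
    constructor
    · intro hu
      by_cases hc : G.Adj x c
      · -- u not adjacent to x, c is; so ⟨u⟩ ~ xvert (or equals it)
        have h2 := (ih hb).2 hc
        by_cases hux : u = x
        · have : (⟨u, hu⟩ : {v : V // ¬ G.Adj x v}) = xvert G x := Subtype.ext hux
          rw [this]; exact h2
        · have hadj : (ncontract G x).Adj ⟨u, hu⟩ (xvert G x) := by
            exact Or.inr (Or.inr ⟨rfl, hux, c, hc, h.symm⟩)
          exact hadj.reachable.trans h2
      · have hadj : (ncontract G x).Adj ⟨u, hu⟩ ⟨c, hc⟩ := Or.inl h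
        exact hadj.reachable.trans ((ih hb).1 hc)
    · intro hxu
      by_cases hc : G.Adj x c
      · exact (ih hb).2 hc
      · by_cases hcx : c = x
        · have : (⟨c, hc⟩ : {v : V // ¬ G.Adj x v}) = xvert G x := Subtype.ext hcx
          exact this ▸ (ih hb).1 hc
        · have hadj : (ncontract G x).Adj (xvert G x) ⟨c, hc⟩ := by
            exact Or.inr (Or.inl ⟨rfl, hcx, u, hxu, h⟩)
          exact hadj.reachable.trans ((ih hb).1 hc)

theorem stmt_5 {V : Type} [Fintype V] (G : SimpleGraph V) (hconn : G.Connected)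
    (x a b : V) (ha : ¬ G.Adj x a) (hb : ¬ G.Adj x b) :
    G.dist a b ≤ (ncontract G x).dist ⟨a, ha⟩ ⟨b, hb⟩ + 2 := by
  classical
  have hreach : (ncontract G x).Reachable ⟨a, ha⟩ ⟨b, hb⟩ :=
    (reachE G x (hconn a b).some hb).1 ha
  obtain ⟨W, hW⟩ := hreach.exists_walk_length_eq_dist
  set P := W.bypass with hP
  have hPpath : P.IsPath := W.bypass_isPath
  have hPlen : P.length ≤ (ncontract G x).dist ⟨a, ha⟩ ⟨b, hb⟩ := hW ▸ W.length_bypass_le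
  by_cases hx : xvert G x ∈ P.support
  · -- split at x
    set P1 := P.takeUntil _ hx with hP1
    set P2 := P.dropUntil _ hx with hP2
    have hsum : P1.length + P2.length = P.length := by
      rw [hP1, hP2, ← SimpleGraph.Walk.length_append, P.take_spec hx]
    have hP1path : P1.IsPath := hPpath.takeUntil hx
    have hP2path : P2.IsPath := hPpath.dropUntil hx
    have hd2 : G.dist x b ≤ P2.length + 1 := by
      apply distD G hconn x P2
      have := hP2path.support_nodup
      rw [P2.support_eq_cons] at this
      exact (List.nodup_cons.mp this).1
    have hd1 : G.dist x a ≤ P1.length + 1 := by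
      have hrev : P1.reverse.IsPath := hP1path.reverse
      have hlen : P1.reverse.length = P1.length := P1.length_reverse
      have h5 := distD G hconn x P1.reverse ?_
      · have h6 : G.dist x a ≤ P1.reverse.length + 1 := h5
        omega
      · have := hrev.support_nodup
        rw [P1.reverse.support_eq_cons] at this
        exact (List.nodup_cons.mp this).1
    calc G.dist a b ≤ G.dist a x + G.dist x b := hconn.dist_triangle
      _ = G.dist x a + G.dist x b := by rw [G.dist_comm]
      _ ≤ (P1.length + 1) + (P2.length + 1) := by omega
      _ ≤ (ncontract G x).dist ⟨a, ha⟩ ⟨b, hb⟩ + 2 := by omega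
  · have h7 := distC G hconn x P hx
    have h8 : G.dist a b ≤ P.length := h7
    omega
end

section
/- Let G=(V,E) be a finite connected simple graph, let x ∈ V, and let y ∈ V with y ∉ N(x) ∪ {x}. Then d_{G/x}(x,y) ≤ d_G(x,y) − 1. -/
open SimpleGraph

lemma ncontract_key {V : Type} (G : SimpleGraph V) (hconn : G.Connected) (x : V) :
    ∀ n : ℕ, ∀ (a : V) (h : ¬ G.Adj x a), a ≠ x → G.dist x a ≤ n →
      ∃ p : (ncontract G x).Walk ⟨x, G.loopless.irrefl x⟩ ⟨a, h⟩, p.length + 1 ≤ G.dist x a := by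
  intro n
  induction n with
  | zero =>
    intro a h ha hd
    exact absurd (Nat.le_antisymm hd (Nat.zero_le _))
      (fun h0 => ha ((hconn.dist_eq_zero_iff.mp h0).symm))
  | succ n ih =>
    intro a h ha hd
    by_cases hle : G.dist x a ≤ n
    · exact ih a h ha hle
    have hdist : G.dist x a = n + 1 := le_antisymm hd (Nat.lt_of_not_le hle)
    -- get a geodesic from a to x
    obtain ⟨q, hq⟩ := (hconn a x).exists_walk_length_eq_dist
    have hax : a ≠ x := ha
    obtain ⟨b, hab, q', rfl⟩ := q.exists_eq_cons_of_ne hax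
    have hq'len : q'.length = n := by
      have : q'.length + 1 = n + 1 := by
        simpa [SimpleGraph.dist_comm, hdist] using hq
      omega
    have hdxb : G.dist x b ≤ n := by
      have := SimpleGraph.dist_le q'.reverse
      simpa [hq'len] using this
    -- dist x a ≥ 2
    have hge2 : 2 ≤ G.dist x a := by
      rcases Nat.lt_or_ge (G.dist x a) 2 with h2 | h2
      · interval_cases hda : G.dist x a
        · exact absurd ((hconn.dist_eq_zero_iff).mp hda).symm ha
        · exact absurd (SimpleGraph.dist_eq_one_iff_adj.mp hda) h
      · exact h2
    by_cases hxb : G.Adj x b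
    · -- x adjacent to b, so x ~ a in ncontract
      have hadj : (ncontract G x).Adj ⟨x, G.loopless.irrefl x⟩ ⟨a, h⟩ :=
        Or.inr (Or.inl ⟨rfl, ha, ⟨b, hxb, hab.symm⟩⟩)
      exact ⟨hadj.toWalk, by simpa using hge2⟩
    · have hbx : b ≠ x := by
        rintro rfl
        exact h hab.symm
      obtain ⟨p, hp⟩ := ih b hxb hbx hdxb
      have hba : (ncontract G x).Adj ⟨b, hxb⟩ ⟨a, h⟩ := Or.inl hab.symm
      refine ⟨p.concat hba, ?_⟩
      rw [SimpleGraph.Walk.length_concat]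
      omega

theorem stmt_7 {V : Type} [Fintype V] (G : SimpleGraph V) (hconn : G.Connected)
    (x y : V) (hy : ¬ G.Adj x y) (hxy : y ≠ x) :
    (ncontract G x).dist ⟨x, G.loopless.irrefl x⟩ ⟨y, hy⟩ + 1 ≤ G.dist x y := by
  obtain ⟨p, hp⟩ := ncontract_key G hconn x (G.dist x y) y hy hxy le_rfl
  have := SimpleGraph.dist_le p
  omega
end

section
/- Let G=(V,E) be a finite connected simple graph and let x ∈ V. Then R(G) − 1 ≤ R(G/x) ≤ R(G), where R denotes the radius. -/
open SimpleGraph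

namespace NCAux

variable {V : Type} {G : SimpleGraph V} {x : V}

/-- the copy of `x` inside the contracted vertex set -/
def xx (G : SimpleGraph V) (x : V) : {v : V // ¬ G.Adj x v} := ⟨x, G.irrefl⟩

lemma dist_le_one_of_adj {W : Type*} {H : SimpleGraph W} {a b : W} (h : H.Adj a b) :
    H.dist a b ≤ 1 := by
  have := SimpleGraph.dist_le (SimpleGraph.Walk.cons h SimpleGraph.Walk.nil)
  simpa using this

/-- Lemma A: a walk in the contraction avoiding `x` lifts to `G` with the same length. -/
lemma lift_avoid (hconn : G.Connected) {a b : {v : V // ¬ G.Adj x v}}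
    (p : (ncontract G x).Walk a b) (hx : ∀ v ∈ p.support, v.1 ≠ x) :
    G.dist a.1 b.1 ≤ p.length := by
  induction p with
  | nil => simp
  | @cons a w b h q ih =>
    have ha : a.1 ≠ x := hx a (by simp)
    have hw : w.1 ≠ x := hx w (by simp)
    have hadj : G.Adj a.1 w.1 := by
      rcases h with h | ⟨h1, -, -⟩ | ⟨h1, -, -⟩
      · exact h
      · exact absurd h1 ha
      · exact absurd h1 hw
    have h2 : G.dist w.1 b.1 ≤ q.length := ih (fun v hv => hx v (by simp [hv]))
    have h1 : G.dist a.1 w.1 ≤ 1 := dist_le_one_of_adj hadj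
    have htri := hconn.dist_triangle (u := a.1) (v := w.1) (w := b.1)
    simp only [SimpleGraph.Walk.length_cons]
    omega

/-- Lemma B: a walk in the contraction starting at `x`, with no other visit to `x`,
lifts to `G` with length at most one more. -/
lemma lift_from_x (hconn : G.Connected) {b : {v : V // ¬ G.Adj x v}}
    (p : (ncontract G x).Walk (xx G x) b) (hx : ∀ v ∈ p.support.tail, v.1 ≠ x) :
    G.dist x b.1 ≤ p.length + 1 := by
  cases p with
  | nil => simp [xx, SimpleGraph.dist_self]
  | @cons _ w _ h q =>
    have hw : w.1 ≠ x := hx w (by simp)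
    have hps : (SimpleGraph.Walk.cons h q).support.tail = q.support := by simp
    obtain ⟨y, hy1, hy2⟩ : ∃ y, G.Adj x y ∧ G.Adj y w.1 := by
      rcases h with h | ⟨-, -, h⟩ | ⟨h1, -, -⟩
      · exact absurd h w.2
      · exact h
      · exact absurd h1 hw
    have hxw : G.dist x w.1 ≤ 2 := by
      have := SimpleGraph.dist_le
        (SimpleGraph.Walk.cons hy1 (SimpleGraph.Walk.cons hy2 SimpleGraph.Walk.nil))
      simpa using this
    have h2 : G.dist w.1 b.1 ≤ q.length :=
      lift_avoid hconn q (fun v hv => hx v (by rw [hps]; exact hv))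
    have htri := hconn.dist_triangle (u := x) (v := w.1) (w := b.1)
    simp only [SimpleGraph.Walk.length_cons]
    omega

/-- the projection `V → V/x` -/
noncomputable def pr (G : SimpleGraph V) (x : V) (v : V) : {v : V // ¬ G.Adj x v} := by
  classical
  exact if h : G.Adj x v then xx G x else ⟨v, h⟩

lemma pr_of_not_adj {v : V} (h : ¬ G.Adj x v) : pr G x v = ⟨v, h⟩ := by
  simp [pr, h]

lemma pr_of_adj {v : V} (h : G.Adj x v) : pr G x v = xx G x := by
  simp [pr, h]

lemma pr_step {a w : V} (h : G.Adj a w) :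
    pr G x a = pr G x w ∨ (ncontract G x).Adj (pr G x a) (pr G x w) := by
  classical
  by_cases hxa : G.Adj x a <;> by_cases hxw : G.Adj x w
  · left; rw [pr_of_adj hxa, pr_of_adj hxw]
  · rw [pr_of_adj hxa, pr_of_not_adj hxw]
    by_cases hwx : w = x
    · left; exact Subtype.ext hwx.symm
    · right; exact Or.inr (Or.inl ⟨rfl, hwx, a, hxa, h⟩)
  · rw [pr_of_not_adj hxa, pr_of_adj hxw]
    by_cases hax : a = x
    · left; exact Subtype.ext hax
    · right; exact Or.inr (Or.inr ⟨rfl, hax, w, hxw, h.symm⟩)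
  · rw [pr_of_not_adj hxa, pr_of_not_adj hxw]
    right; exact Or.inl h

lemma pr_reachable {a b : V} (p : G.Walk a b) :
    (ncontract G x).Reachable (pr G x a) (pr G x b) := by
  induction p with
  | nil => exact SimpleGraph.Reachable.refl _
  | @cons a w b h q ih =>
    refine SimpleGraph.Reachable.trans ?_ ih
    rcases pr_step h with h' | h'
    · rw [h']
    · exact h'.reachable

lemma ncontract_connected (hconn : G.Connected) : (ncontract G x).Connected := by
  rw [SimpleGraph.connected_iff]
  refine ⟨fun a b => ?_, ⟨xx G x⟩⟩
  have := pr_reachable (x := x) ((hconn a.1 b.1).some)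
  rwa [pr_of_not_adj a.2, pr_of_not_adj b.2] at this

lemma pr_dist_le (hconn : G.Connected) {a b : V} (p : G.Walk a b) :
    (ncontract G x).dist (pr G x a) (pr G x b) ≤ p.length := by
  have hc := ncontract_connected (x := x) hconn
  induction p with
  | nil =>
    have h0 : (ncontract G x).dist (pr G x a) (pr G x a) = 0 := SimpleGraph.dist_self
    simp [h0]
  | @cons a w b h q ih =>
    have h1 : (ncontract G x).dist (pr G x a) (pr G x w) ≤ 1 := by
      rcases pr_step h with h' | h'
      · rw [h']
        have h0 : (ncontract G x).dist (pr G x w) (pr G x w) = 0 := SimpleGraph.dist_self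
        omega
      · exact dist_le_one_of_adj h'
    have htri := hc.dist_triangle (u := pr G x a) (v := pr G x w) (w := pr G x b)
    simp only [SimpleGraph.Walk.length_cons]
    omega

/-- L1: distance from x in G is at most distance in the contraction plus 1 -/
lemma dist_from_x_le (hconn : G.Connected) (b : {v : V // ¬ G.Adj x v}) :
    G.dist x b.1 ≤ (ncontract G x).dist (xx G x) b + 1 := by
  classical
  have hc := ncontract_connected (x := x) hconn
  obtain ⟨p, hp⟩ := hc.exists_walk_length_eq_dist (xx G x) b
  have hbp : p.bypass.IsPath := p.bypass_isPath
  have hlen : p.bypass.length ≤ p.length := SimpleGraph.Walk.length_bypass_le p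
  have hx : ∀ v ∈ p.bypass.support.tail, v.1 ≠ x := by
    intro v hv hvx
    have hnd := hbp.support_nodup
    rw [SimpleGraph.Walk.support_eq_cons] at hnd
    have : v = xx G x := Subtype.ext hvx
    rw [this] at hv
    exact (List.nodup_cons.mp hnd).1 hv
  have := lift_from_x hconn p.bypass hx
  omega

/-- L2': either the contraction distance lifts exactly, or `x` lies on a geodesic -/
lemma dist_split (hconn : G.Connected) (a b : {v : V // ¬ G.Adj x v}) :
    G.dist a.1 b.1 ≤ (ncontract G x).dist a b ∨
      (ncontract G x).dist a b =
        (ncontract G x).dist a (xx G x) + (ncontract G x).dist (xx G x) b := by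
  classical
  have hc := ncontract_connected (x := x) hconn
  obtain ⟨p, hp⟩ := hc.exists_walk_length_eq_dist a b
  have hbp : p.bypass.IsPath := p.bypass_isPath
  have hlen : p.bypass.length ≤ p.length := SimpleGraph.Walk.length_bypass_le p
  by_cases hmem : xx G x ∈ p.bypass.support
  · right
    have h1 : (ncontract G x).dist a (xx G x) ≤ (p.bypass.takeUntil _ hmem).length :=
      SimpleGraph.dist_le _
    have h2 : (ncontract G x).dist (xx G x) b ≤ (p.bypass.dropUntil _ hmem).length :=
      SimpleGraph.dist_le _
    have hsum : (p.bypass.takeUntil _ hmem).length + (p.bypass.dropUntil _ hmem).length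
        = p.bypass.length := by
      have h := congrArg SimpleGraph.Walk.length (p.bypass.take_spec hmem)
      rw [SimpleGraph.Walk.length_append] at h
      exact h
    have htri := hc.dist_triangle (u := a) (v := xx G x) (w := b)
    omega
  · left
    have hx : ∀ v ∈ p.bypass.support, v.1 ≠ x := by
      intro v hv hvx
      have hvxx : v = xx G x := Subtype.ext (show v.1 = (xx G x).1 from hvx)
      exact hmem (hvxx ▸ hv)
    have := lift_avoid hconn p.bypass hx
    omega

end NCAux

open NCAux in
theorem stmt_8 {V : Type} [Fintype V] (G : SimpleGraph V) (hconn : G.Connected)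
    (x : V) :
    grRadius G ≤ grRadius (ncontract G x) + 1 ∧
      grRadius (ncontract G x) ≤ grRadius G := by
  classical
  haveI : Nonempty V := ⟨x⟩
  haveI : Nonempty {v : V // ¬ G.Adj x v} := ⟨xx G x⟩
  have hc := ncontract_connected (x := x) hconn
  have bddG : ∀ c : V, BddAbove (Set.range (G.dist c)) :=
    fun c => (Set.finite_range _).bddAbove
  have bddH : ∀ c, BddAbove (Set.range ((ncontract G x).dist c)) :=
    fun c => (Set.finite_range _).bddAbove
  have eccG_le : ∀ (c : V) (m : ℕ), (∀ b, G.dist c b ≤ m) → eccentr G c ≤ m := by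
    intro c m hm
    exact csSup_le (Set.range_nonempty _) (by rintro _ ⟨b, rfl⟩; exact hm b)
  have eccH_le : ∀ (c) (m : ℕ), (∀ b, (ncontract G x).dist c b ≤ m) →
      eccentr (ncontract G x) c ≤ m := by
    intro c m hm
    exact csSup_le (Set.range_nonempty _) (by rintro _ ⟨b, rfl⟩; exact hm b)
  have le_eccG : ∀ (c b : V), G.dist c b ≤ eccentr G c :=
    fun c b => le_csSup (bddG c) (Set.mem_range_self b)
  have le_eccH : ∀ c b, (ncontract G x).dist c b ≤ eccentr (ncontract G x) c :=
    fun c b => le_csSup (bddH c) (Set.mem_range_self b)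
  have radG_le : ∀ c : V, grRadius G ≤ eccentr G c :=
    fun c => Nat.sInf_le (Set.mem_range_self c)
  have radH_le : ∀ c, grRadius (ncontract G x) ≤ eccentr (ncontract G x) c :=
    fun c => Nat.sInf_le (Set.mem_range_self c)
  constructor
  · -- R(G) ≤ R(H) + 1
    obtain ⟨c', hc'⟩ : ∃ c', eccentr (ncontract G x) c' = grRadius (ncontract G x) :=
      Nat.sInf_mem (Set.range_nonempty (eccentr (ncontract G x)))
    by_cases hcx : c' = xx G x
    · -- center is x : use x as center of G
      refine le_trans (radG_le x) ?_
      refine eccG_le x _ (fun b => ?_)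
      by_cases hb : G.Adj x b
      · have := dist_le_one_of_adj hb
        omega
      · have h1 : G.dist x b ≤ (ncontract G x).dist (xx G x) ⟨b, hb⟩ + 1 :=
          dist_from_x_le (x := x) hconn ⟨b, hb⟩
        have h2 := le_eccH c' ⟨b, hb⟩
        rw [hc'] at h2
        rw [hcx] at h2
        omega
    · -- center c' ≠ x
      have hk : 0 < (ncontract G x).dist c' (xx G x) := hc.pos_dist_of_ne hcx
      have hkr : (ncontract G x).dist c' (xx G x) ≤ grRadius (ncontract G x) := by
        rw [← hc']; exact le_eccH c' (xx G x)
      -- find z with dist c' z ≤ 1 and dist z x ≤ k in G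
      obtain ⟨z, hz1, hz2⟩ : ∃ z : V, G.dist c'.1 z ≤ 1 ∧
          G.dist z x ≤ (ncontract G x).dist c' (xx G x) := by
        obtain ⟨p, hp⟩ := hc.exists_walk_length_eq_dist c' (xx G x)
        cases p with
        | nil => exact absurd rfl hcx
        | @cons _ w _ h q =>
          simp only [SimpleGraph.Walk.length_cons] at hp
          by_cases hwx : w = xx G x
          · -- first step lands on x: edge c'–x is contracted
            subst hwx
            obtain ⟨y, hy1, hy2⟩ : ∃ y, G.Adj x y ∧ G.Adj y c'.1 := by
              rcases h with h | ⟨h1, -, -⟩ | ⟨-, -, h⟩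
              · exact absurd h.symm c'.2
              · exact absurd (Subtype.ext h1) hcx
              · exact h
            refine ⟨y, dist_le_one_of_adj hy2.symm, ?_⟩
            have : G.dist y x ≤ 1 := dist_le_one_of_adj hy1.symm
            omega
          · -- first step stays away from x : it is a G-edge
            have hadj : G.Adj c'.1 w.1 := by
              rcases h with h | ⟨h1, -, -⟩ | ⟨h1, -, -⟩
              · exact h
              · exact absurd (Subtype.ext h1) hcx
              · exact absurd (Subtype.ext h1) hwx
            refine ⟨w.1, dist_le_one_of_adj hadj, ?_⟩
            have h1 : G.dist x w.1 ≤ (ncontract G x).dist (xx G x) w + 1 :=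
              dist_from_x_le (x := x) hconn w
            have h2 : (ncontract G x).dist (xx G x) w ≤ q.length := by
              rw [SimpleGraph.dist_comm]; exact SimpleGraph.dist_le q
            have h4 : G.dist w.1 x = G.dist x w.1 := SimpleGraph.dist_comm ..
            omega
      -- z is a good center of G
      refine le_trans (radG_le z) ?_
      refine eccG_le z _ (fun b => ?_)
      have htri1 := hconn.dist_triangle (u := z) (v := c'.1) (w := b)
      have htri2 := hconn.dist_triangle (u := z) (v := x) (w := b)
      have hzc : G.dist z c'.1 = G.dist c'.1 z := SimpleGraph.dist_comm ..
      by_cases hb : G.Adj x b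
      · have h1 : G.dist x b ≤ 1 := dist_le_one_of_adj hb
        omega
      · rcases dist_split (x := x) hconn c' ⟨b, hb⟩ with h | h
        · have h' : G.dist c'.1 b ≤ (ncontract G x).dist c' ⟨b, hb⟩ := h
          have h2 := le_eccH c' ⟨b, hb⟩
          rw [hc'] at h2
          omega
        · have h1 : G.dist x b ≤ (ncontract G x).dist (xx G x) ⟨b, hb⟩ + 1 :=
            dist_from_x_le (x := x) hconn ⟨b, hb⟩
          have h2 := le_eccH c' ⟨b, hb⟩
          rw [hc'] at h2
          omega
  · -- R(H) ≤ R(G)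
    obtain ⟨c, hcc⟩ : ∃ c, eccentr G c = grRadius G :=
      Nat.sInf_mem (Set.range_nonempty (eccentr G))
    refine le_trans (radH_le (pr G x c)) ?_
    refine eccH_le _ _ (fun b => ?_)
    obtain ⟨p, hp⟩ := hconn.exists_walk_length_eq_dist c b.1
    have h1 := pr_dist_le (x := x) hconn p
    rw [pr_of_not_adj b.2] at h1
    have h1' : (ncontract G x).dist (pr G x c) b ≤ p.length := h1
    have h2 := le_eccG c b.1
    rw [hcc] at h2
    omega
end

section
/- Let G=(V,E) be a finite connected simple graph and let c ∈ C(G) be a center vertex with R(G) ≥ 1. Then R(G/c) = R(G) − 1. -/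
open SimpleGraph

section Aux

variable {V : Type} [Fintype V] {G : SimpleGraph V} {c : V}

lemma nc_adj_iff {a b : {v : V // ¬ G.Adj c v}} :
    (ncontract G c).Adj a b ↔ (G.Adj a.1 b.1 ∨
    (a.1 = c ∧ b.1 ≠ c ∧ ∃ y, G.Adj c y ∧ G.Adj y b.1) ∨
    (b.1 = c ∧ a.1 ≠ c ∧ ∃ y, G.Adj c y ∧ G.Adj y a.1)) := Iff.rfl

/-- the copy of `c` in the contracted graph -/
abbrev ncc (G : SimpleGraph V) (c : V) : {v : V // ¬ G.Adj c v} := ⟨c, G.loopless.irrefl c⟩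

lemma nc_adj_of_ne {a b : {v : V // ¬ G.Adj c v}} (h : (ncontract G c).Adj a b)
    (ha : a.1 ≠ c) (hb : b.1 ≠ c) : G.Adj a.1 b.1 := by
  rcases nc_adj_iff.mp h with h | ⟨h1, -⟩ | ⟨h1, -⟩
  · exact h
  · exact absurd h1 ha
  · exact absurd h1 hb

lemma nc_dist_le_two {u : {v : V // ¬ G.Adj c v}}
    (h : (ncontract G c).Adj (ncc G c) u) : G.dist c u.1 ≤ 2 := by
  rcases nc_adj_iff.mp h with h | ⟨-, -, y, hcy, hyu⟩ | ⟨h1, h2, -⟩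
  · exact absurd h u.2
  · exact le_trans (SimpleGraph.dist_le ((Walk.cons hcy (Walk.cons hyu Walk.nil)))) (by simp)
  · exact absurd rfl h2

lemma nc_lift (hconn : G.Connected) {a b : {v : V // ¬ G.Adj c v}}
    (w : (ncontract G c).Walk a b) (hs : ∀ u ∈ w.support, u.1 ≠ c) :
    G.dist a.1 b.1 ≤ w.length := by
  induction w with
  | nil => simp
  | @cons a u b h p ih =>
      have ha : a.1 ≠ c := hs a (Walk.start_mem_support _)
      have hu : u.1 ≠ c := hs u (by simp)
      have hadj : G.Adj a.1 u.1 := nc_adj_of_ne h ha hu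
      have h1 : G.dist u.1 b.1 ≤ p.length := ih (fun x hx => hs x (by simp [hx]))
      calc G.dist a.1 b.1 ≤ G.dist a.1 u.1 + G.dist u.1 b.1 := hconn.dist_triangle
        _ ≤ 1 + p.length := add_le_add (SimpleGraph.dist_le hadj.toWalk) h1
        _ = (Walk.cons h p).length := by simp [Nat.add_comm]

lemma nc_down (hconn : G.Connected) :
    ∀ n (x : {v : V // ¬ G.Adj c v}), G.dist c x.1 ≤ n → x.1 ≠ c →
    ∃ w : (ncontract G c).Walk (ncc G c) x, w.length + 1 ≤ G.dist c x.1 := by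
  intro n
  induction n with
  | zero =>
      intro x hx hne
      exact absurd hx (by have := hconn.pos_dist_of_ne (fun h => hne h.symm); omega)
  | succ n ih =>
      intro x hxn hne
      have hd1 : 0 < G.dist c x.1 := hconn.pos_dist_of_ne (fun h => hne h.symm)
      have hd2 : G.dist c x.1 ≠ 1 := fun h => x.2 (dist_eq_one_iff_adj.mp h)
      obtain ⟨p, hp⟩ := hconn.exists_walk_length_eq_dist x.1 c
      obtain ⟨u, hadj, p', rfl⟩ := Walk.exists_eq_cons_of_ne hne p
      have hp'l : p'.length + 1 = G.dist x.1 c := by simpa using hp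
      have hcu : G.dist c u ≤ G.dist c x.1 - 1 := by
        have h1 : G.dist u c ≤ p'.length := SimpleGraph.dist_le p'
        have h2 : G.dist x.1 c = G.dist c x.1 := SimpleGraph.dist_comm
        have h3 : G.dist c u = G.dist u c := SimpleGraph.dist_comm
        omega
      by_cases hu : G.Adj c u
      · have hedge : (ncontract G c).Adj (ncc G c) x :=
          nc_adj_iff.mpr (Or.inr (Or.inl ⟨rfl, hne, u, hu, hadj.symm⟩))
        refine ⟨hedge.toWalk, ?_⟩
        have : G.dist c x.1 ≤ G.dist c u + G.dist u x.1 := hconn.dist_triangle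
        have h4 : G.dist c u ≤ 1 := SimpleGraph.dist_le hu.toWalk
        have h5 : G.dist u x.1 ≤ 1 := SimpleGraph.dist_le hadj.symm.toWalk
        simp only [Walk.length_cons, Walk.length_nil]
        omega
      · have huc : u ≠ c := by
          rintro rfl
          exact x.2 hadj.symm
        obtain ⟨w1, hw1'⟩ := ih ⟨u, hu⟩ (by show G.dist c u ≤ n; omega) huc
        have hw1 : w1.length + 1 ≤ G.dist c u := hw1'
        have hedge : (ncontract G c).Adj ⟨u, hu⟩ x := nc_adj_iff.mpr (Or.inl hadj.symm)
        refine ⟨w1.concat hedge, ?_⟩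
        rw [Walk.length_concat]
        omega

lemma nc_reach (hconn : G.Connected) (x : {v : V // ¬ G.Adj c v}) :
    (ncontract G c).Reachable (ncc G c) x := by
  by_cases hx : x.1 = c
  · have : x = ncc G c := Subtype.ext hx
    rw [this]
  · obtain ⟨w, -⟩ := nc_down hconn (G.dist c x.1) x le_rfl hx
    exact ⟨w⟩

lemma nc_reach' (hconn : G.Connected) (x y : {v : V // ¬ G.Adj c v}) :
    (ncontract G c).Reachable x y :=
  (nc_reach hconn x).symm.trans (nc_reach hconn y)

lemma nc_dist_down (hconn : G.Connected) (x : {v : V // ¬ G.Adj c v}) (hx : x.1 ≠ c) :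
    (ncontract G c).dist (ncc G c) x + 1 ≤ G.dist c x.1 := by
  obtain ⟨w, hw⟩ := nc_down hconn (G.dist c x.1) x le_rfl hx
  have := SimpleGraph.dist_le w
  omega

lemma nc_up (hconn : G.Connected) (x : {v : V // ¬ G.Adj c v}) :
    G.dist c x.1 ≤ (ncontract G c).dist (ncc G c) x + 1 := by
  by_cases hx : x.1 = c
  · rw [hx]; simp [SimpleGraph.dist_self]
  · classical
    obtain ⟨w, hw⟩ := (nc_reach hconn x).exists_walk_length_eq_dist
    have hne : ncc G c ≠ x := fun h => hx (congrArg Subtype.val h).symm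
    have hpath := w.bypass_isPath
    have hpl : w.bypass.length ≤ w.length := Walk.length_bypass_le w
    obtain ⟨u, he, p', hpeq⟩ := Walk.exists_eq_cons_of_ne hne w.bypass
    have hsup : ∀ v ∈ p'.support, v.1 ≠ c := by
      intro v hv hvc
      have hv' : v = ncc G c := Subtype.ext hvc
      subst hv'
      rw [hpeq] at hpath
      exact (Walk.cons_isPath_iff _ _).mp hpath |>.2 hv
    have h1 : G.dist u.1 x.1 ≤ p'.length := nc_lift hconn p' hsup
    have h2 : G.dist c u.1 ≤ 2 := nc_dist_le_two he
    have h3 : G.dist c x.1 ≤ G.dist c u.1 + G.dist u.1 x.1 := hconn.dist_triangle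
    have h4 : p'.length + 1 = w.bypass.length := by rw [hpeq]; simp
    omega

lemma nc_split (hconn : G.Connected) (a b : {v : V // ¬ G.Adj c v}) :
    G.dist a.1 b.1 ≤ (ncontract G c).dist a b ∨
    (ncontract G c).dist a (ncc G c) + (ncontract G c).dist (ncc G c) b
      ≤ (ncontract G c).dist a b := by
  classical
  obtain ⟨w, hw⟩ := (nc_reach' hconn a b).exists_walk_length_eq_dist
  by_cases hcw : ncc G c ∈ w.support
  · right
    have hspec := w.take_spec hcw
    have hlen : (w.takeUntil _ hcw).length + (w.dropUntil _ hcw).length = w.length := by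
      rw [← Walk.length_append, hspec]
    have h1 := SimpleGraph.dist_le (w.takeUntil _ hcw)
    have h2 := SimpleGraph.dist_le (w.dropUntil _ hcw)
    omega
  · left
    rw [← hw]
    refine nc_lift hconn w ?_
    intro u hu huc
    exact hcw (by rwa [show ncc G c = u from (Subtype.ext huc.symm)])

lemma ecc_le {W : Type} {G : SimpleGraph W} {x : W} {n : ℕ}
    (h : ∀ y, G.dist x y ≤ n) : eccentr G x ≤ n := by
  have : Nonempty W := ⟨x⟩
  exact csSup_le (Set.range_nonempty _) (by rintro _ ⟨y, rfl⟩; exact h y)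

lemma dist_le_ecc {W : Type} [Finite W] {G : SimpleGraph W} (x y : W) :
    G.dist x y ≤ eccentr G x :=
  le_csSup (Set.finite_range _).bddAbove ⟨y, rfl⟩

lemma rad_le_ecc {W : Type} {G : SimpleGraph W} (x : W) : grRadius G ≤ eccentr G x :=
  Nat.sInf_le ⟨x, rfl⟩

lemma exists_ecc {W : Type} [Finite W] {G : SimpleGraph W} (x : W) :
    ∃ y, G.dist x y = eccentr G x := by
  have : Nonempty W := ⟨x⟩
  have : eccentr G x ∈ Set.range (G.dist x) :=
    Nat.sSup_mem (Set.range_nonempty _) (Set.finite_range _).bddAbove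
  exact this

end Aux

theorem stmt_9 {V : Type} [Fintype V] (G : SimpleGraph V) (hconn : G.Connected)
    (c : V) (hc : eccentr G c = grRadius G) (hR : 1 ≤ grRadius G) :
    grRadius (ncontract G c) = grRadius G - 1 := by
  have hdcR : ∀ y, G.dist c y ≤ grRadius G := fun y => hc ▸ dist_le_ecc c y
  -- upper bound: eccentricity of (ncc G c) in the contraction is ≤ R - 1
  have heccc' : eccentr (ncontract G c) (ncc G c) ≤ grRadius G - 1 := by
    apply ecc_le
    intro y
    by_cases hy : y.1 = c
    · have hy' : y = ncc G c := Subtype.ext hy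
      rw [hy', SimpleGraph.dist_self]
      omega
    · have h1 := nc_dist_down hconn y hy
      have h2 := hdcR y.1
      omega
  have hub : grRadius (ncontract G c) ≤ grRadius G - 1 :=
    le_trans (rad_le_ecc (ncc G c)) heccc'
  -- lower bound
  by_cases hR2 : grRadius G ≤ 1
  · omega
  push_neg at hR2
  have hlb : ∀ a : {v : V // ¬ G.Adj c v}, grRadius G - 1 ≤ eccentr (ncontract G c) a := by
    intro a
    by_contra hcon
    push_neg at hcon
    have hecc : ∀ b, (ncontract G c).dist a b ≤ grRadius G - 2 := by
      intro b
      have := dist_le_ecc (G := ncontract G c) a b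
      omega
    -- an eccentric vertex f of c
    obtain ⟨f, hf⟩ := exists_ecc (G := G) c
    rw [hc] at hf
    have hfc : ¬ G.Adj c f := by
      intro h
      rw [dist_eq_one_iff_adj.mpr h] at hf
      omega
    have hfne : f ≠ c := by rintro rfl; rw [SimpleGraph.dist_self] at hf; omega
    have hac : a.1 ≠ c := by
      rintro hac
      have ha' : a = ncc G c := Subtype.ext hac
      have h1 : G.dist c f ≤ (ncontract G c).dist (ncc G c) ⟨f, hfc⟩ + 1 :=
        nc_up hconn ⟨f, hfc⟩
      have h2 := hecc ⟨f, hfc⟩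
      rw [ha'] at h2
      rw [hf] at h1
      omega
    -- dist from c to a
    have hdac_ub : G.dist c a.1 ≤ grRadius G - 1 := by
      have h1 := nc_up hconn a
      have h2 := hecc (ncc G c)
      rw [SimpleGraph.dist_comm (G := ncontract G c)] at h2
      omega
    have hdac_lb : 2 ≤ G.dist c a.1 := by
      have h1 : 0 < G.dist c a.1 := hconn.pos_dist_of_ne (fun h => hac h.symm)
      have h2 : G.dist c a.1 ≠ 1 := fun h => a.2 (dist_eq_one_iff_adj.mp h)
      omega
    -- predecessor a' of a toward c
    obtain ⟨p, hp⟩ := hconn.exists_walk_length_eq_dist a.1 c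
    obtain ⟨a', hadj, p', rfl⟩ := Walk.exists_eq_cons_of_ne hac p
    have hp'l : p'.length + 1 = G.dist a.1 c := by simpa using hp
    have hca' : G.dist a' c = G.dist c a.1 - 1 := by
      have h1 : G.dist a' c ≤ p'.length := SimpleGraph.dist_le p'
      have h2 : G.dist c a.1 ≤ G.dist c a' + G.dist a' a.1 := hconn.dist_triangle
      have h3 : G.dist a' a.1 ≤ 1 := SimpleGraph.dist_le hadj.symm.toWalk
      have h4 : G.dist a.1 c = G.dist c a.1 := SimpleGraph.dist_comm
      have h5 : G.dist c a' = G.dist a' c := SimpleGraph.dist_comm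
      omega
    -- now show eccentr G a' ≤ R - 1
    have hkey : ∀ b : V, G.dist a' b ≤ grRadius G - 1 := by
      intro b
      have htra : G.dist a' b ≤ G.dist a' c + G.dist c b := hconn.dist_triangle
      by_cases hbc : b = c
      · subst hbc
        omega
      by_cases hbadj : G.Adj c b
      · have : G.dist c b ≤ 1 := SimpleGraph.dist_le hbadj.toWalk
        omega
      · -- b is a vertex of the contraction
        have hb2 := hecc ⟨b, hbadj⟩
        rcases nc_split hconn a ⟨b, hbadj⟩ with hsp | hsp
        · have h1 : G.dist a.1 b ≤ grRadius G - 2 := le_trans hsp hb2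
          have h2 : G.dist a' b ≤ G.dist a' a.1 + G.dist a.1 b := hconn.dist_triangle
          have h3 : G.dist a' a.1 ≤ 1 := SimpleGraph.dist_le hadj.symm.toWalk
          omega
        · have h1 := nc_up hconn a
          have h2 : G.dist c b ≤ (ncontract G c).dist (ncc G c) ⟨b, hbadj⟩ + 1 :=
            nc_up hconn ⟨b, hbadj⟩
          rw [SimpleGraph.dist_comm (G := ncontract G c) (u := ncc G c)] at h1
          omega
    have h6 : eccentr G a' ≤ grRadius G - 1 := ecc_le hkey
    have h7 := rad_le_ecc (G := G) a'
    omega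
  have hlb' : grRadius G - 1 ≤ grRadius (ncontract G c) := by
    have : Nonempty {v : V // ¬ G.Adj c v} := ⟨ncc G c⟩
    apply le_csInf (Set.range_nonempty _)
    rintro _ ⟨x, rfl⟩
    exact hlb x
  omega
end

section
/- Let G=(V,E) be a finite connected simple graph and let c ∈ C(G) be a center vertex with R(G) ≥ 1. Then c is a center vertex of G/c, i.e., the eccentricity of c in G/c equals R(G/c) = R(G) − 1. -/
open SimpleGraph

section Aux

set_option linter.unusedSectionVars false

variable {V : Type} [Finite V] {G : SimpleGraph V} {c : V}

lemma dist_le_eccentr (G : SimpleGraph V) (x y : V) : G.dist x y ≤ eccentr G x :=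
  le_csSup (Set.Finite.bddAbove (Set.finite_range _)) ⟨y, rfl⟩

lemma exists_eccentr (G : SimpleGraph V) (x : V) : ∃ y, G.dist x y = eccentr G x := by
  have h : eccentr G x ∈ Set.range (G.dist x) :=
    Nat.sSup_mem ⟨G.dist x x, x, rfl⟩ (Set.Finite.bddAbove (Set.finite_range _))
  exact h

lemma grRadius_le_eccentr (G : SimpleGraph V) (x : V) : grRadius G ≤ eccentr G x :=
  Nat.sInf_le ⟨x, rfl⟩

lemma eccentr_le {G : SimpleGraph V} {x : V} {n : ℕ} (h : ∀ y, G.dist x y ≤ n) :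
    eccentr G x ≤ n :=
  csSup_le ⟨G.dist x x, x, rfl⟩ (by rintro m ⟨y, rfl⟩; exact h y)

lemma exists_grRadius (G : SimpleGraph V) [Nonempty V] :
    ∃ x, eccentr G x = grRadius G :=
  Nat.sInf_mem (Set.range_nonempty _)

open Classical in
noncomputable def proj (G : SimpleGraph V) (c : V) (z : V) : {v : V // ¬ G.Adj c v} :=
  if h : G.Adj c z then ⟨c, G.loopless.irrefl c⟩ else ⟨z, h⟩

lemma proj_eq_self (u : {v : V // ¬ G.Adj c v}) : proj G c u.1 = u := dif_neg u.2

lemma proj_eq_c {z : V} (h : G.Adj c z) : proj G c z = ⟨c, G.loopless.irrefl c⟩ := dif_pos h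

lemma proj_step {z w : V} (h : G.Adj z w) :
    proj G c z = proj G c w ∨ (ncontract G c).Adj (proj G c z) (proj G c w) := by
  by_cases hz : G.Adj c z <;> by_cases hw : G.Adj c w
  · rw [proj_eq_c hz, proj_eq_c hw]; exact Or.inl rfl
  · rw [proj_eq_c hz, proj_eq_self (G := G) ⟨w, hw⟩]
    by_cases hwc : w = c
    · exact Or.inl (Subtype.ext hwc.symm)
    · exact Or.inr (by change _ ∨ _ ∨ _; exact Or.inr (Or.inl ⟨rfl, hwc, z, hz, h⟩))
  · rw [proj_eq_c hw, proj_eq_self (G := G) ⟨z, hz⟩]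
    by_cases hzc : z = c
    · exact Or.inl (Subtype.ext hzc)
    · exact Or.inr (by change _ ∨ _ ∨ _; exact Or.inr (Or.inr ⟨rfl, hzc, w, hw, h.symm⟩))
  · rw [proj_eq_self (G := G) ⟨z, hz⟩, proj_eq_self (G := G) ⟨w, hw⟩]
    exact Or.inr (by change _ ∨ _ ∨ _; exact Or.inl h)

lemma proj_walk {z y : V} (p : G.Walk z y) :
    ∃ q : (ncontract G c).Walk (proj G c z) (proj G c y), q.length ≤ p.length := by
  induction p with
  | nil => exact ⟨.nil, le_rfl⟩
  | cons h p ih =>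
    obtain ⟨q, hq⟩ := ih
    rcases proj_step (c := c) h with he | ha
    · exact ⟨q.copy he.symm rfl, by simpa using hq.trans (Nat.le_succ _)⟩
    · exact ⟨q.cons ha, by simpa using Nat.succ_le_succ hq⟩

lemma proj_walk' (u v : {v : V // ¬ G.Adj c v}) (p : G.Walk u.1 v.1) :
    ∃ q : (ncontract G c).Walk u v, q.length ≤ p.length := by
  obtain ⟨q, hq⟩ := proj_walk (c := c) p
  exact ⟨q.copy (proj_eq_self u) (proj_eq_self v), by simpa using hq⟩

lemma ncontract_connected (hconn : G.Connected) : (ncontract G c).Connected := by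
  rw [connected_iff]
  refine ⟨fun u v => ?_, ⟨⟨c, G.loopless.irrefl c⟩⟩⟩
  obtain ⟨p⟩ := hconn u.1 v.1
  obtain ⟨q, -⟩ := proj_walk' u v p
  exact ⟨q⟩

lemma dist_q_le (hconn : G.Connected) (u v : {v : V // ¬ G.Adj c v}) :
    (ncontract G c).dist u v ≤ G.dist u.1 v.1 := by
  obtain ⟨p, hp⟩ := hconn.exists_walk_length_eq_dist u.1 v.1
  obtain ⟨q, hq⟩ := proj_walk' u v p
  exact ((ncontract G c).dist_le q).trans (hq.trans hp.le)

lemma exists_adj_dist (hconn : G.Connected) {u v : V} (h : u ≠ v) :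
    ∃ m, G.Adj u m ∧ G.dist m v + 1 = G.dist u v := by
  obtain ⟨p, hp⟩ := hconn.exists_walk_length_eq_dist u v
  cases p with
  | nil => exact absurd rfl h
  | @cons _ m _ hadj p' =>
    have h1 : G.dist m v ≤ p'.length := G.dist_le p'
    have h2 : G.dist u v ≤ G.dist u m + G.dist m v := hconn.dist_triangle
    have h3 : G.dist u m ≤ 1 := G.dist_le hadj.toWalk
    simp only [Walk.length_cons] at hp
    exact ⟨m, hadj, by omega⟩

lemma dist_q_c_le (hconn : G.Connected) (v : {v : V // ¬ G.Adj c v}) (hv : v.1 ≠ c) :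
    (ncontract G c).dist ⟨c, G.loopless.irrefl c⟩ v + 1 ≤ G.dist c v.1 := by
  obtain ⟨m, hm, hmd⟩ := exists_adj_dist hconn (Ne.symm hv)
  obtain ⟨p, hp⟩ := hconn.exists_walk_length_eq_dist m v.1
  obtain ⟨q, hq⟩ := proj_walk (c := c) p
  have hle : (ncontract G c).dist ⟨c, G.loopless.irrefl c⟩ v ≤ p.length :=
    ((ncontract G c).dist_le (q.copy (proj_eq_c hm) (proj_eq_self v))).trans (by simpa using hq)
  omega

lemma lift_walk_c {u w : {v : V // ¬ G.Adj c v}} (hconn : G.Connected)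
    (q : (ncontract G c).Walk u w) (hw : w.1 = c) :
    G.dist u.1 c ≤ q.length + 1 := by
  induction q with
  | nil => rw [hw, SimpleGraph.dist_self]; omega
  | @cons a b w' h q ih =>
    rcases (show _ ∨ _ ∨ _ from h) with h | ⟨ha, -, -⟩ | ⟨hb, -, y, hcy, hya⟩
    · have h1 : G.dist a.1 c ≤ G.dist a.1 b.1 + G.dist b.1 c := hconn.dist_triangle
      have h2 : G.dist a.1 b.1 ≤ 1 := G.dist_le h.toWalk
      have h3 := ih hw
      simp only [Walk.length_cons]
      omega
    · simp [ha, SimpleGraph.dist_self]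
    · have : G.dist a.1 c ≤ 2 :=
        G.dist_le (Walk.cons hya.symm (Walk.cons hcy.symm Walk.nil))
      simp only [Walk.length_cons]
      omega

lemma dist_c_lift (hconn : G.Connected) (hq : (ncontract G c).Connected)
    (u : {v : V // ¬ G.Adj c v}) :
    G.dist u.1 c ≤ (ncontract G c).dist u ⟨c, G.loopless.irrefl c⟩ + 1 := by
  obtain ⟨p, hp⟩ := hq.exists_walk_length_eq_dist u ⟨c, G.loopless.irrefl c⟩
  exact hp ▸ lift_walk_c hconn p rfl

lemma lift_walk {u v : {v : V // ¬ G.Adj c v}} (hconn : G.Connected)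
    (hq : (ncontract G c).Connected) (q : (ncontract G c).Walk u v) :
    G.dist u.1 v.1 ≤ q.length ∨
      (ncontract G c).dist u ⟨c, G.loopless.irrefl c⟩ +
        (ncontract G c).dist ⟨c, G.loopless.irrefl c⟩ v ≤ q.length := by
  induction q with
  | nil => left; simp
  | @cons a b w h q ih =>
    by_cases hac : a = ⟨c, G.loopless.irrefl c⟩
    · right
      have h0 : (ncontract G c).dist a ⟨c, G.loopless.irrefl c⟩ = 0 := by
        rw [hac]; exact SimpleGraph.dist_self
      have h1 := (ncontract G c).dist_le ((Walk.cons h q).copy hac rfl)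
      rw [Walk.length_copy] at h1
      omega
    · by_cases hbc : b = ⟨c, G.loopless.irrefl c⟩
      · right
        have hcb : (ncontract G c).Adj a ⟨c, G.loopless.irrefl c⟩ := hbc ▸ h
        have h1 : (ncontract G c).dist a ⟨c, G.loopless.irrefl c⟩ ≤ 1 :=
          (ncontract G c).dist_le hcb.toWalk
        have h2 := (ncontract G c).dist_le (q.copy hbc rfl)
        rw [Walk.length_copy] at h2
        simp only [Walk.length_cons]
        omega
      · have hG : G.Adj a.1 b.1 := by
          change _ ∨ _ ∨ _ at h
          rcases h with h | ⟨ha, -, -⟩ | ⟨hb, -, -⟩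
          · exact h
          · exact absurd (Subtype.ext ha) hac
          · exact absurd (Subtype.ext hb) hbc
        rcases ih with h1 | h1
        · left
          have h2 : G.dist a.1 w.1 ≤ G.dist a.1 b.1 + G.dist b.1 w.1 := hconn.dist_triangle
          have h3 : G.dist a.1 b.1 ≤ 1 := G.dist_le hG.toWalk
          simp only [Walk.length_cons]
          omega
        · right
          have h2 : (ncontract G c).dist a ⟨c, G.loopless.irrefl c⟩ ≤
              (ncontract G c).dist a b + (ncontract G c).dist b ⟨c, G.loopless.irrefl c⟩ :=
            hq.dist_triangle
          have h3 : (ncontract G c).dist a b ≤ 1 := (ncontract G c).dist_le h.toWalk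
          simp only [Walk.length_cons]
          omega

lemma dist_lift (hconn : G.Connected) (hq : (ncontract G c).Connected)
    (u v : {v : V // ¬ G.Adj c v}) :
    G.dist u.1 v.1 ≤ (ncontract G c).dist u v ∨
      (ncontract G c).dist u ⟨c, G.loopless.irrefl c⟩ +
        (ncontract G c).dist ⟨c, G.loopless.irrefl c⟩ v ≤ (ncontract G c).dist u v := by
  obtain ⟨p, hp⟩ := hq.exists_walk_length_eq_dist u v
  exact hp ▸ lift_walk hconn hq p

lemma key (hconn : G.Connected) {u : V} (hu : u ≠ c) :
    ∃ v, grRadius G ≤ G.dist u v + 1 ∧ grRadius G + 1 ≤ G.dist c v + G.dist u c := by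
  by_contra hno
  push_neg at hno
  obtain ⟨m, hm, hmd⟩ := exists_adj_dist hconn hu
  have h1 : grRadius G ≤ eccentr G m := grRadius_le_eccentr G m
  obtain ⟨y, hy⟩ := exists_eccentr G m
  by_cases hcase : grRadius G ≤ G.dist u y + 1
  · have h2 := hno y hcase
    have h3 : G.dist m y ≤ G.dist m c + G.dist c y := hconn.dist_triangle
    omega
  · have h3 : G.dist m y ≤ G.dist m u + G.dist u y := hconn.dist_triangle
    have h4 : G.dist m u ≤ 1 := G.dist_le hm.symm.toWalk
    omega

end Aux

theorem stmt_10 {V : Type} [Fintype V] (G : SimpleGraph V) (hconn : G.Connected)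
    (c : V) (hc : eccentr G c = grRadius G) (hR : 1 ≤ grRadius G) :
    eccentr (ncontract G c) ⟨c, G.loopless.irrefl c⟩ = grRadius (ncontract G c) ∧
      grRadius (ncontract G c) = grRadius G - 1 := by
  have hq : (ncontract G c).Connected := ncontract_connected hconn
  have hEccC_le : eccentr (ncontract G c) ⟨c, G.loopless.irrefl c⟩ ≤ grRadius G - 1 := by
    apply eccentr_le
    intro v
    by_cases hv : v.1 = c
    · have hvc : v = ⟨c, G.loopless.irrefl c⟩ := Subtype.ext hv
      rw [hvc, SimpleGraph.dist_self]
      omega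
    · have h1 := dist_q_c_le hconn v hv
      have h2 : G.dist c v.1 ≤ eccentr G c := dist_le_eccentr G c v.1
      omega
  have hEccC_ge : grRadius G - 1 ≤ eccentr (ncontract G c) ⟨c, G.loopless.irrefl c⟩ := by
    by_cases hR2 : 2 ≤ grRadius G
    · obtain ⟨y, hy⟩ := exists_eccentr G c
      have hyne : ¬ G.Adj c y := by
        intro had
        have h3 : G.dist c y = 1 := SimpleGraph.dist_eq_one_iff_adj.mpr had
        omega
      have h1 := dist_c_lift hconn hq ⟨y, hyne⟩
      have h2 : G.dist (⟨y, hyne⟩ : {v : V // ¬ G.Adj c v}).1 c = G.dist c y :=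
        SimpleGraph.dist_comm
      have h4 := dist_le_eccentr (ncontract G c) ⟨c, G.loopless.irrefl c⟩ ⟨y, hyne⟩
      have h5 : (ncontract G c).dist ⟨c, G.loopless.irrefl c⟩ ⟨y, hyne⟩ =
          (ncontract G c).dist ⟨y, hyne⟩ ⟨c, G.loopless.irrefl c⟩ := SimpleGraph.dist_comm
      omega
    · omega
  have hF3 : ∀ u : {v : V // ¬ G.Adj c v}, grRadius G - 1 ≤ eccentr (ncontract G c) u := by
    intro u
    by_cases huc : u.1 = c
    · have huc' : u = ⟨c, G.loopless.irrefl c⟩ := Subtype.ext huc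
      rw [huc']
      exact hEccC_ge
    · have ha1 := dist_c_lift hconn hq u
      by_cases haR : grRadius G ≤ G.dist u.1 c
      · have h2 := dist_le_eccentr (ncontract G c) u ⟨c, G.loopless.irrefl c⟩
        omega
      · obtain ⟨v, hv1, hv2⟩ := key hconn huc
        have hvna : ¬ G.Adj c v := by
          intro had
          have h3 : G.dist c v = 1 := SimpleGraph.dist_eq_one_iff_adj.mpr had
          omega
        have hl := dist_c_lift hconn hq ⟨v, hvna⟩
        have hcm : G.dist (⟨v, hvna⟩ : {v : V // ¬ G.Adj c v}).1 c = G.dist c v :=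
          SimpleGraph.dist_comm
        have h6 := dist_le_eccentr (ncontract G c) u ⟨v, hvna⟩
        have h7 : G.dist u.1 (⟨v, hvna⟩ : {v : V // ¬ G.Adj c v}).1 = G.dist u.1 v := rfl
        rcases dist_lift hconn hq u ⟨v, hvna⟩ with h | h
        · omega
        · have h5 : (ncontract G c).dist ⟨c, G.loopless.irrefl c⟩ ⟨v, hvna⟩ =
              (ncontract G c).dist ⟨v, hvna⟩ ⟨c, G.loopless.irrefl c⟩ := SimpleGraph.dist_comm
          omega
  haveI : Nonempty {v : V // ¬ G.Adj c v} := ⟨⟨c, G.loopless.irrefl c⟩⟩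
  have hge : grRadius G - 1 ≤ grRadius (ncontract G c) := by
    obtain ⟨x, hx⟩ := exists_grRadius (ncontract G c)
    rw [← hx]
    exact hF3 x
  have hle : grRadius (ncontract G c) ≤ grRadius G - 1 :=
    (grRadius_le_eccentr (ncontract G c) ⟨c, G.loopless.irrefl c⟩).trans hEccC_le
  have hrq : grRadius (ncontract G c) = grRadius G - 1 := le_antisymm hle hge
  refine ⟨le_antisymm (by omega) ?_, hrq⟩
  exact grRadius_le_eccentr (ncontract G c) ⟨c, G.loopless.irrefl c⟩
end

section
/- Let G=(V,E) be a finite connected simple graph. Let x₁, …, x_k be a sequence of vertices such that, setting G₀ = G and G_{i+1} = G_i / x_{i+1} (where x_{i+1} is required to be a vertex of G_i), the final graph G_k has exactly one vertex. Then k ≥ R(G), where R(G) is the radius of G. -/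
open SimpleGraph

/-- `Reduces k W H` holds iff there is a sequence of `k` neighborhood contractions
`G₀ = H`, `Gᵢ₊₁ = Gᵢ / xᵢ₊₁` (each `xᵢ₊₁` a vertex of `Gᵢ`) such that the final
graph `Gₖ` has exactly one vertex. -/
def Reduces : (k : ℕ) → (W : Type) → SimpleGraph W → Prop
  | 0, W, _ => Nat.card W = 1
  | k + 1, W, H => ∃ x : W, Reduces k _ (ncontract H x)

section Aux

variable {V : Type} (H : SimpleGraph V) (x : V)

/-- the copy of `x` inside the contracted graph -/
def xhat : {v : V // ¬ H.Adj x v} := ⟨x, H.loopless.irrefl x⟩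

lemma ne_xhat {a : {v : V // ¬ H.Adj x v}} (h : a ≠ xhat H x) : a.1 ≠ x :=
  fun h' => h (Subtype.ext h')

lemma ncontract_adj_lift {a b : {v : V // ¬ H.Adj x v}} (ha : a ≠ xhat H x)
    (hb : b ≠ xhat H x) (h : (ncontract H x).Adj a b) : H.Adj a.1 b.1 := by
  rcases h with h | ⟨h1, -, -⟩ | ⟨h1, -, -⟩
  · exact h
  · exact absurd h1 (ne_xhat H x ha)
  · exact absurd h1 (ne_xhat H x hb)

lemma ncontract_adj_xhat {b : {v : V // ¬ H.Adj x v}}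
    (h : (ncontract H x).Adj (xhat H x) b) : ∃ y, H.Adj x y ∧ H.Adj y b.1 := by
  rcases h with h | ⟨-, -, hy⟩ | ⟨-, hne, -⟩
  · exact absurd h b.2
  · exact hy
  · exact absurd rfl hne

lemma walk_lift (hH : H.Connected) {a b : {v : V // ¬ H.Adj x v}}
    (p : (ncontract H x).Walk a b) (hx : xhat H x ∉ p.support) :
    H.dist a.1 b.1 ≤ p.length := by
  induction p with
  | nil => simp [SimpleGraph.dist_self]
  | @cons a c b h q ih =>
    rw [Walk.support_cons, List.mem_cons] at hx
    push_neg at hx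
    obtain ⟨hx1, hx2⟩ := hx
    have hc : c ≠ xhat H x := fun h' => hx2 (h' ▸ q.start_mem_support)
    have hadj : H.Adj a.1 c.1 := ncontract_adj_lift H x (Ne.symm hx1) hc h
    calc H.dist a.1 b.1 ≤ H.dist a.1 c.1 + H.dist c.1 b.1 := hH.dist_triangle
      _ ≤ 1 + q.length := by
          gcongr
          · simpa using SimpleGraph.dist_le (Walk.cons hadj Walk.nil)
          · exact ih hx2
      _ = (Walk.cons h q).length := by rw [Walk.length_cons]; omega

lemma dist_x_le (hH : H.Connected) {b : {v : V // ¬ H.Adj x v}}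
    (p : (ncontract H x).Walk (xhat H x) b) (hx : xhat H x ∉ p.support.tail) :
    H.dist x b.1 ≤ p.length + 1 := by
  cases p with
  | nil => simp [xhat, SimpleGraph.dist_self]
  | @cons a c b h q =>
    rw [Walk.support_cons, List.tail_cons] at hx
    obtain ⟨y, hxy, hyc⟩ := ncontract_adj_xhat H x h
    have h2 : H.dist x c.1 ≤ 2 := by
      simpa using SimpleGraph.dist_le (Walk.cons hxy (Walk.cons hyc Walk.nil))
    calc H.dist x b.1 ≤ H.dist x c.1 + H.dist c.1 b.1 := hH.dist_triangle
      _ ≤ 2 + q.length := by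
          gcongr
          exact walk_lift H x hH q hx
      _ = (Walk.cons h q).length + 1 := by rw [Walk.length_cons]; omega

lemma dist_to_xhat (hH : H.Connected) (hK : (ncontract H x).Connected)
    (a : {v : V // ¬ H.Adj x v}) :
    H.dist a.1 x ≤ (ncontract H x).dist a (xhat H x) + 1 := by
  classical
  obtain ⟨p, hp⟩ := (hK (xhat H x) a).exists_walk_length_eq_dist
  have hpath := p.bypass_isPath
  have hxt : xhat H x ∉ p.bypass.support.tail := by
    have hnd := hpath.support_nodup
    rw [p.bypass.support_eq_cons] at hnd
    exact (List.nodup_cons.mp hnd).1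
  have h1 : H.dist x a.1 ≤ p.bypass.length + 1 := dist_x_le H x hH p.bypass hxt
  have h2 : p.bypass.length ≤ p.length := p.length_bypass_le
  have h3 : H.dist a.1 x = H.dist x a.1 := SimpleGraph.dist_comm (u := a.1) (v := x)
  have h4 : (ncontract H x).dist a (xhat H x) = (ncontract H x).dist (xhat H x) a :=
    SimpleGraph.dist_comm (u := a) (v := xhat H x)
  rw [h3, h4]
  omega

lemma ncontract_connected_s12 (hH : H.Connected) : (ncontract H x).Connected := by
  classical
  set φ : V → {v : V // ¬ H.Adj x v} :=
    fun v => if h : H.Adj x v then xhat H x else ⟨v, h⟩ with hφ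
  have step : ∀ u v : V, H.Adj u v → (ncontract H x).Reachable (φ u) (φ v) := by
    intro u v huv
    by_cases hu : H.Adj x u <;> by_cases hv : H.Adj x v
    · simp only [hφ, dif_pos hu, dif_pos hv]
      exact Reachable.refl _
    · by_cases hvx : v = x
      · have : φ v = xhat H x := by
          subst hvx; simp only [hφ, dif_neg hv]; rfl
        rw [this]; simp only [hφ, dif_pos hu]
        exact Reachable.refl _
      · have hadj : (ncontract H x).Adj (xhat H x) ⟨v, hv⟩ :=
          Or.inr (Or.inl ⟨rfl, hvx, u, hu, huv⟩)
        simp only [hφ, dif_pos hu, dif_neg hv]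
        exact hadj.reachable
    · by_cases hux : u = x
      · have : φ u = xhat H x := by
          subst hux; simp only [hφ, dif_neg hu]; rfl
        rw [this]; simp only [hφ, dif_pos hv]
        exact Reachable.refl _
      · have hadj : (ncontract H x).Adj (xhat H x) ⟨u, hu⟩ :=
          Or.inr (Or.inl ⟨rfl, hux, v, hv, huv.symm⟩)
        simp only [hφ, dif_neg hu, dif_pos hv]
        exact hadj.symm.reachable
    · have hadj : (ncontract H x).Adj ⟨u, hu⟩ ⟨v, hv⟩ := Or.inl huv
      simp only [hφ, dif_neg hu, dif_neg hv]
      exact hadj.reachable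
  have reach : ∀ u v : V, H.Reachable u v → (ncontract H x).Reachable (φ u) (φ v) := by
    intro u v h
    obtain ⟨p⟩ := h
    induction p with
    | nil => exact Reachable.refl _
    | cons h q ih => exact (step _ _ h).trans ih
  rw [connected_iff]
  refine ⟨fun a b => ?_, ⟨xhat H x⟩⟩
  have ha : φ a.1 = a := by simp only [hφ, dif_neg a.2]
  have hb : φ b.1 = b := by simp only [hφ, dif_neg b.2]
  have := reach a.1 b.1 (hH a.1 b.1)
  rwa [ha, hb] at this

end Aux

lemma key_lemma (k : ℕ) : ∀ (W : Type) [Finite W] (H : SimpleGraph W),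
    H.Connected → Reduces k W H → ∃ c : W, ∀ v : W, H.dist c v ≤ k := by
  induction k with
  | zero =>
    intro W _ H _ hred
    simp only [Reduces] at hred
    obtain ⟨hs, ⟨c⟩⟩ := Nat.card_eq_one_iff_unique.mp hred
    exact ⟨c, fun v => by rw [Subsingleton.elim v c]; simp⟩
  | succ k ih =>
    intro W _ H hH hred
    classical
    obtain ⟨x, hred⟩ := hred
    have hK : (ncontract H x).Connected := ncontract_connected_s12 H x hH
    obtain ⟨w, hw⟩ := ih _ (ncontract H x) hK hred
    set K := ncontract H x with hKdef
    set d := K.dist w (xhat H x) with hd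
    have hdk : d ≤ k := hw (xhat H x)
    obtain ⟨c, hc1, hc2⟩ : ∃ c : W, H.dist c w.1 ≤ 1 ∧ H.dist c x ≤ d := by
      by_cases h0 : d = 0
      · have hz : K.dist w (xhat H x) = 0 := by rw [← hd]; exact h0
        have hwx : w = xhat H x := (hK.dist_eq_zero_iff).mp hz
        refine ⟨x, ?_, ?_⟩
        · rw [hwx]; simp [xhat, SimpleGraph.dist_self]
        · simp [SimpleGraph.dist_self]
      by_cases h1 : d = 1
      · have hadj : K.Adj w (xhat H x) := by
          apply SimpleGraph.dist_eq_one_iff_adj.mp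
          rw [← hd]; exact h1
        rcases hadj with h | ⟨-, hne, -⟩ | ⟨-, -, y, hxy, hyw⟩
        · exact absurd h.symm w.2
        · exact absurd rfl hne
        · refine ⟨y, ?_, ?_⟩
          · simpa using SimpleGraph.dist_le (Walk.cons hyw Walk.nil)
          · have : H.dist y x ≤ 1 := by
              simpa using SimpleGraph.dist_le (Walk.cons hxy.symm Walk.nil)
            omega
      · have hd2 : 2 ≤ d := by omega
        obtain ⟨p, hp⟩ := (hK w (xhat H x)).exists_walk_length_eq_dist
        cases p with
        | nil => simp only [Walk.length_nil] at hp; omega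
        | @cons a c₁ b h q =>
          have hlen : q.length + 1 = d := by rw [hd]; simpa using hp
          have hwne : w ≠ xhat H x := by
            rintro rfl
            exact h0 (by rw [hd]; exact SimpleGraph.dist_self)
          have hc₁ : c₁ ≠ xhat H x := by
            rintro rfl
            have : d ≤ 1 := by
              simpa using SimpleGraph.dist_le (Walk.cons h Walk.nil)
            omega
          have hadj : H.Adj w.1 c₁.1 := ncontract_adj_lift H x hwne hc₁ h
          refine ⟨c₁.1, ?_, ?_⟩
          · simpa using SimpleGraph.dist_le (Walk.cons hadj.symm Walk.nil)
          · have h3 : H.dist c₁.1 x ≤ q.length + 1 :=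
              le_trans (dist_to_xhat H x hH hK c₁)
                (Nat.add_le_add_right (SimpleGraph.dist_le q) 1)
            omega
    refine ⟨c, fun v => ?_⟩
    by_cases hv : H.Adj x v
    · have hxv : H.dist x v ≤ 1 := by
        simpa using SimpleGraph.dist_le (Walk.cons hv Walk.nil)
      calc H.dist c v ≤ H.dist c x + H.dist x v := hH.dist_triangle
        _ ≤ k + 1 := by omega
    · obtain ⟨p, hp⟩ := (hK w ⟨v, hv⟩).exists_walk_length_eq_dist
      have hpl : p.bypass.length ≤ k := by
        have := p.length_bypass_le
        have := hw ⟨v, hv⟩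
        omega
      have hpath := p.bypass_isPath
      by_cases hsup : xhat H x ∈ p.bypass.support
      · have hlen : (p.bypass.takeUntil _ hsup).length +
            (p.bypass.dropUntil _ hsup).length = p.bypass.length := by
          have h5 := congrArg Walk.length (p.bypass.take_spec hsup)
          rw [Walk.length_append] at h5
          exact h5
        have hdt : d ≤ (p.bypass.takeUntil _ hsup).length :=
          SimpleGraph.dist_le _
        have hrp : (p.bypass.dropUntil _ hsup).IsPath := hpath.dropUntil hsup
        have hxr : xhat H x ∉ (p.bypass.dropUntil _ hsup).support.tail := by
          have hnd := hrp.support_nodup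
          rw [(p.bypass.dropUntil _ hsup).support_eq_cons] at hnd
          exact (List.nodup_cons.mp hnd).1
        have h2 : H.dist x v ≤ (p.bypass.dropUntil _ hsup).length + 1 :=
          dist_x_le H x hH _ hxr
        calc H.dist c v ≤ H.dist c x + H.dist x v := hH.dist_triangle
          _ ≤ k + 1 := by omega
      · have h2 : H.dist w.1 v ≤ p.bypass.length :=
          walk_lift H x hH p.bypass hsup
        calc H.dist c v ≤ H.dist c w.1 + H.dist w.1 v := hH.dist_triangle
          _ ≤ k + 1 := by omega

theorem stmt_12 {V : Type} [Fintype V] (G : SimpleGraph V) (hconn : G.Connected)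
    (k : ℕ) (h : Reduces k V G) :
    grRadius G ≤ k := by
  have : Nonempty V := hconn.nonempty
  obtain ⟨c, hc⟩ := key_lemma k V G hconn h
  have hecc : eccentr G c ≤ k := by
    apply csSup_le (Set.range_nonempty _)
    rintro a ⟨v, rfl⟩
    exact hc v
  exact le_trans (Nat.sInf_le ⟨c, rfl⟩) hecc
end

section
/- Let G=(V,E) be a finite connected simple graph. The minimum length k of a sequence of vertices x₁, …, x_k such that, setting G₀ = G and G_{i+1} = G_i / x_{i+1} (where x_{i+1} is required to be a vertex of G_i), the final graph G_k has exactly one vertex, is exactly R(G), the radius of G. Equivalently, the minimum number of flooding moves needed to flood an entire 2-colored connected graph in 2-FREE-FLOOD-IT equals the radius of its reduced graph. -/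
open SimpleGraph

/-- Projection: a walk in `H` from `x` to a surviving vertex `a ≠ x` yields a walk in
`ncontract H x` that is strictly shorter. -/
lemma liftA {V : Type} {H : SimpleGraph V} {x : V} {a z : V} (r : H.Walk a z) :
    ∀ (hz : z = x) (ha : ¬ H.Adj x a), a ≠ x →
      ∃ q : (ncontract H x).Walk ⟨a, ha⟩ ⟨x, H.irrefl⟩, q.length + 1 ≤ r.length := by
  induction r with
  | nil => intro hz _ hne; exact absurd hz hne
  | @cons a b c h r' ih =>
    intro hz ha hne
    by_cases hbx : b = x
    · subst hbx; exact absurd h.symm ha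
    · by_cases hadj : H.Adj x b
      · refine ⟨Walk.cons (Or.inr (Or.inr ⟨rfl, hne, b, hadj, h.symm⟩)) Walk.nil, ?_⟩
        have hr' : r'.length ≠ 0 := fun h0 => hbx ((Walk.eq_of_length_eq_zero h0).trans hz)
        show 0 + 1 + 1 ≤ r'.length + 1
        omega
      · obtain ⟨q', hq'⟩ := ih hz hadj hbx
        refine ⟨Walk.cons (Or.inl h) q', ?_⟩
        show q'.length + 1 + 1 ≤ r'.length + 1
        omega

/-- Lift: a walk in `ncontract H x` from a vertex `v` to `x` yields a walk in `H`
from `x` to `v` of length at most one more. -/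
lemma liftBx {V : Type} {H : SimpleGraph V} {x : V} {v t : {v : V // ¬ H.Adj x v}}
    (q : (ncontract H x).Walk v t) (ht : t = ⟨x, H.irrefl⟩) :
    ∃ w : H.Walk x v.1, w.length ≤ q.length + 1 := by
  induction q with
  | nil =>
    subst ht
    exact ⟨Walk.nil, by simp⟩
  | @cons v b c h q' ih =>
    rcases id h with h1 | ⟨hv, -, -⟩ | ⟨-, -, y, hxy, hyv⟩
    · obtain ⟨w, hw⟩ := ih ht
      refine ⟨w.append (Walk.cons h1.symm Walk.nil), ?_⟩
      simp only [Walk.length_append, Walk.length_cons, Walk.length_nil]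
      omega
    · refine ⟨Walk.nil.copy rfl hv.symm, ?_⟩
      simp
    · refine ⟨Walk.cons hxy (Walk.cons hyv Walk.nil), ?_⟩
      simp only [Walk.length_cons, Walk.length_nil]
      omega

/-- Lift: a walk in `ncontract H x` avoiding `x` yields a walk in `H` of the same
length. -/
lemma liftPure {V : Type} {H : SimpleGraph V} {x : V} {a b : {v : V // ¬ H.Adj x v}}
    (q : (ncontract H x).Walk a b) (hx : (⟨x, H.irrefl⟩ : {v : V // ¬ H.Adj x v}) ∉ q.support) :
    ∃ w : H.Walk a.1 b.1, w.length ≤ q.length := by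
  induction q with
  | nil => exact ⟨Walk.nil, le_refl _⟩
  | @cons a b c h q' ih =>
    rw [Walk.support_cons] at hx
    have hax : a ≠ (⟨x, H.irrefl⟩ : {v : V // ¬ H.Adj x v}) := fun he => hx (he ▸ List.mem_cons_self)
    have hq's : (⟨x, H.irrefl⟩ : {v : V // ¬ H.Adj x v}) ∉ q'.support :=
      fun he => hx (List.mem_cons_of_mem _ he)
    have hbx : b ≠ (⟨x, H.irrefl⟩ : {v : V // ¬ H.Adj x v}) :=
      fun he => hq's (he ▸ q'.start_mem_support)
    rcases id h with h1 | ⟨hv, -, -⟩ | ⟨hb, -, -⟩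
    · obtain ⟨w, hw⟩ := ih hq's
      exact ⟨Walk.cons h1 w, by simpa using hw⟩
    · exact absurd (Subtype.ext hv) hax
    · exact absurd (Subtype.ext hb) hbx

lemma pickU {V : Type} {H : SimpleGraph V} {a b : V} (w : H.Walk a b) :
    ∃ (u : V) (w1 : H.Walk u b) (w2 : H.Walk u a),
      w2.length ≤ 1 ∧ (w1.length = 0 ∨ w1.length + 1 ≤ w.length) := by
  cases w with
  | nil => exact ⟨a, Walk.nil, Walk.nil, by simp, Or.inl rfl⟩
  | cons h w' =>
    exact ⟨_, w', Walk.cons h.symm Walk.nil, by simp, Or.inr (by simp)⟩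

/-- Upper bound machinery: if all vertices are within distance `e` of `x` (witnessed by
walks), then the graph reduces in `e` moves. -/
lemma lemU : ∀ (e : ℕ) (V : Type) (H : SimpleGraph V) (x : V),
    (∀ v, ∃ w : H.Walk x v, w.length ≤ e) → Reduces e V H := by
  intro e
  induction e with
  | zero =>
    intro V H x h
    show Nat.card V = 1
    rw [Nat.card_eq_one_iff_unique]
    refine ⟨⟨fun a b => ?_⟩, ⟨x⟩⟩
    obtain ⟨wa, hwa⟩ := h a
    obtain ⟨wb, hwb⟩ := h b
    have ha := Walk.eq_of_length_eq_zero (Nat.le_zero.mp hwa)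
    have hb := Walk.eq_of_length_eq_zero (Nat.le_zero.mp hwb)
    exact ha ▸ hb ▸ rfl
  | succ e ih =>
    intro V H x h
    show ∃ z : V, Reduces e _ (ncontract H z)
    refine ⟨x, ih _ _ ⟨x, H.irrefl⟩ fun v => ?_⟩
    by_cases hvx : v.1 = x
    · have : (⟨x, H.irrefl⟩ : {v : V // ¬ H.Adj x v}) = v := Subtype.ext hvx.symm
      subst this
      exact ⟨Walk.nil, Nat.zero_le _⟩
    · obtain ⟨w, hw⟩ := h v.1
      obtain ⟨q, hq⟩ := liftA w.reverse rfl v.2 hvx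
      refine ⟨q.reverse, ?_⟩
      rw [Walk.length_reverse] at hq ⊢
      omega

/-- Lower bound machinery: if a graph reduces in `k` moves, some vertex has walks of
length at most `k` to every vertex. -/
lemma lemD : ∀ (k : ℕ) (V : Type) (H : SimpleGraph V), Reduces k V H →
    ∃ u : V, ∀ v : V, ∃ w : H.Walk u v, w.length ≤ k := by
  intro k
  induction k with
  | zero =>
    intro V H h
    have h1 : Nat.card V = 1 := h
    obtain ⟨hsub, ⟨u⟩⟩ := Nat.card_eq_one_iff_unique.mp h1
    refine ⟨u, fun v => ?_⟩
    obtain rfl : u = v := Subsingleton.elim u v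
    exact ⟨Walk.nil, le_refl _⟩
  | succ k ih =>
    intro V H h
    classical
    obtain ⟨x, hred⟩ : ∃ x : V, Reduces k _ (ncontract H x) := h
    obtain ⟨c', hc'⟩ := ih _ _ hred
    set G' := ncontract H x with hG'
    set xW : {v : V // ¬ H.Adj x v} := ⟨x, H.irrefl⟩ with hxW
    obtain ⟨w0, hw0⟩ := hc' xW
    set m' := G'.dist c' xW with hm'
    have hm'k : m' ≤ k := le_trans (SimpleGraph.dist_le w0) hw0
    obtain ⟨p, hp⟩ := (w0.reachable).exists_walk_length_eq_dist
    obtain ⟨wxc, hwxc⟩ := liftBx p rfl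
    obtain ⟨u, w1, w2, hw2, hw1⟩ := pickU wxc.reverse
    have hw1m : w1.length ≤ m' := by
      rcases hw1 with h0 | h1
      · omega
      · rw [Walk.length_reverse] at h1
        omega
    refine ⟨u, fun v => ?_⟩
    by_cases hv : H.Adj x v
    · refine ⟨w1.append (Walk.cons hv Walk.nil), ?_⟩
      simp only [Walk.length_append, Walk.length_cons, Walk.length_nil]
      omega
    · by_cases hvx : v = x
      · subst hvx
        exact ⟨w1, by omega⟩
      · obtain ⟨q0, hq0⟩ := hc' ⟨v, hv⟩
        by_cases hxs : xW ∈ q0.support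
        · have hsplit : (q0.takeUntil xW hxs).length + (q0.dropUntil xW hxs).length
              = q0.length := by
            conv_rhs => rw [← q0.take_spec hxs]
            rw [Walk.length_append]
          have hm't : m' ≤ (q0.takeUntil xW hxs).length :=
            SimpleGraph.dist_le _
          obtain ⟨wxv, hwxv⟩ := liftBx (q0.dropUntil xW hxs).reverse rfl
          refine ⟨w1.append wxv, ?_⟩
          rw [Walk.length_reverse] at hwxv
          simp only [Walk.length_append]
          omega
        · obtain ⟨wcv, hwcv⟩ := liftPure q0 hxs
          refine ⟨w2.append wcv, ?_⟩
          simp only [Walk.length_append]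
          omega

theorem stmt_13 {V : Type} [Fintype V] (G : SimpleGraph V) (hconn : G.Connected) :
    IsLeast {k : ℕ | Reduces k V G} (grRadius G) := by
  haveI : Nonempty V := hconn.nonempty
  constructor
  · obtain ⟨x₀, hx₀⟩ := Nat.sInf_mem (Set.range_nonempty (eccentr G))
    show Reduces (grRadius G) V G
    apply lemU _ _ _ x₀
    intro v
    obtain ⟨w, hw⟩ := (hconn.preconnected x₀ v).exists_walk_length_eq_dist
    refine ⟨w, ?_⟩
    rw [hw]
    calc G.dist x₀ v ≤ eccentr G x₀ :=
          le_csSup (Set.Finite.bddAbove (Set.finite_range _)) ⟨v, rfl⟩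
      _ = grRadius G := hx₀
  · intro k hk
    obtain ⟨u, hu⟩ := lemD k V G hk
    have hecc : eccentr G u ≤ k := by
      apply csSup_le (Set.range_nonempty _)
      rintro n ⟨v, rfl⟩
      obtain ⟨w, hw⟩ := hu v
      exact le_trans (SimpleGraph.dist_le w) hw
    exact le_trans (Nat.sInf_le ⟨u, rfl⟩) hecc
end
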